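/- arXiv:1804.01733 — 9 statements merged into one kernel-verified Lean document; each statement's English description precedes it below -/
import Mathlib

section
/- The pair (P_K⁺, P_𝒪⁺) is a Hecke pair: for every g ∈ P_K⁺, writing Γ = P_𝒪⁺, the double coset ΓgΓ contains only finitely many left cosets and finitely many right cosets of Γ; that is, the sets {hΓ : h ∈ ΓgΓ} and {Γh : h ∈ ΓgΓ} are both finite. -/
/-- An element of a number field is *totally positive* if it is positive in every
real embedding. -/
def TotallyPositive (K : Type*) [Field K] (x : K) : Prop :=
  ∀ φ : K →+* ℝ, 0 < φ x

/-- The `ax + b` group of a field `K`: pairs `(a, b)` with `a ∈ Kˣ`, `b ∈ K`, acting as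
`t ↦ a * t + b`, with composition as group law. -/
@[ext]
structure AffPair (K : Type*) [Field K] where
  a : Kˣ
  b : K

namespace AffPair

variable {K : Type*} [Field K]

instance : Mul (AffPair K) := ⟨fun p q => ⟨p.a * q.a, p.b + (p.a : K) * q.b⟩⟩
instance : One (AffPair K) := ⟨⟨1, 0⟩⟩
instance : Inv (AffPair K) := ⟨fun p => ⟨p.a⁻¹, -(((p.a⁻¹ : Kˣ) : K) * p.b)⟩⟩

@[simp] lemma mul_a (p q : AffPair K) : (p * q).a = p.a * q.a := rfl
@[simp] lemma mul_b (p q : AffPair K) : (p * q).b = p.b + (p.a : K) * q.b := rfl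
@[simp] lemma one_a : (1 : AffPair K).a = 1 := rfl
@[simp] lemma one_b : (1 : AffPair K).b = 0 := rfl
@[simp] lemma inv_a (p : AffPair K) : (p⁻¹).a = p.a⁻¹ := rfl
@[simp] lemma inv_b (p : AffPair K) : (p⁻¹).b = -(((p.a⁻¹ : Kˣ) : K) * p.b) := rfl

instance : Group (AffPair K) where
  mul_assoc p q r := by
    ext
    · simp [mul_assoc]
    · simp [mul_add, mul_assoc, add_assoc]
  one_mul p := by ext <;> simp
  mul_one p := by ext <;> simp
  inv_mul_cancel p := by
    ext
    · simp
    · simp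

end AffPair

/-- The subgroup `P_𝒪⁺ ⊆ P_K⁺` of affine transformations whose linear coefficient is a
totally positive unit of the ring of integers and whose translation part is an algebraic
integer, viewed as a subset of the affine group. -/
def GammaSet (K : Type*) [Field K] : Set (AffPair K) :=
  {p | TotallyPositive K (p.a : K) ∧ IsIntegral ℤ ((p.a : K)) ∧
    IsIntegral ℤ (((p.a⁻¹ : Kˣ) : K)) ∧ IsIntegral ℤ p.b}

/-- The double coset `Γ g Γ` where `Γ = P_𝒪⁺`. -/
def doubleCoset (K : Type*) [Field K] (g : AffPair K) : Set (AffPair K) :=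
  {h | ∃ γ₁ ∈ GammaSet K, ∃ γ₂ ∈ GammaSet K, h = γ₁ * g * γ₂}

/-- The collection of left cosets `hΓ` with `h ∈ ΓgΓ`. -/
def leftCosetsIn (K : Type*) [Field K] (g : AffPair K) : Set (Set (AffPair K)) :=
  {C | ∃ h ∈ doubleCoset K g, C = (fun γ => h * γ) '' GammaSet K}

/-- The collection of right cosets `Γh` with `h ∈ ΓgΓ`. -/
def rightCosetsIn (K : Type*) [Field K] (g : AffPair K) : Set (Set (AffPair K)) :=
  {C | ∃ h ∈ doubleCoset K g, C = (fun γ => γ * h) '' GammaSet K}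

section HeckeAux

open NumberField

variable {K : Type*} [Field K]

lemma TotallyPositive.mul {x y : K} (hx : TotallyPositive K x) (hy : TotallyPositive K y) :
    TotallyPositive K (x * y) := fun φ => by
  rw [map_mul]; exact mul_pos (hx φ) (hy φ)

lemma TotallyPositive.inv {x : K} (hx : TotallyPositive K x) : TotallyPositive K x⁻¹ :=
  fun φ => by rw [map_inv₀]; exact inv_pos.2 (hx φ)

lemma one_mem_GammaSet : (1 : AffPair K) ∈ GammaSet K := by
  refine ⟨fun φ => ?_, ?_, ?_, ?_⟩ <;>
    simp [isIntegral_one, isIntegral_zero]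

lemma mul_mem_GammaSet {p q : AffPair K} (hp : p ∈ GammaSet K) (hq : q ∈ GammaSet K) :
    p * q ∈ GammaSet K := by
  obtain ⟨hp1, hp2, hp3, hp4⟩ := hp
  obtain ⟨hq1, hq2, hq3, hq4⟩ := hq
  refine ⟨?_, ?_, ?_, ?_⟩
  · simpa using hp1.mul hq1
  · simpa using hp2.mul hq2
  · simpa [mul_inv] using hq3.mul hp3
  · exact hp4.add (hp2.mul hq4)

lemma inv_mem_GammaSet {p : AffPair K} (hp : p ∈ GammaSet K) :
    p⁻¹ ∈ GammaSet K := by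
  obtain ⟨hp1, hp2, hp3, hp4⟩ := hp
  refine ⟨?_, ?_, ?_, ?_⟩
  · simpa [Units.val_inv_eq_inv_val] using hp1.inv
  · simpa using hp3
  · simpa using hp2
  · exact (hp3.mul hp4).neg

lemma left_coset_mul (h : AffPair K) {δ : AffPair K} (hδ : δ ∈ GammaSet K) :
    (fun γ => h * δ * γ) '' GammaSet K = (fun γ => h * γ) '' GammaSet K := by
  ext x
  constructor
  · rintro ⟨γ, hγ, rfl⟩
    exact ⟨δ * γ, mul_mem_GammaSet hδ hγ, (mul_assoc _ _ _).symm⟩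
  · rintro ⟨γ, hγ, rfl⟩
    refine ⟨δ⁻¹ * γ, mul_mem_GammaSet (inv_mem_GammaSet hδ) hγ, ?_⟩
    simp [mul_assoc]

lemma right_coset_mul (h : AffPair K) {δ : AffPair K} (hδ : δ ∈ GammaSet K) :
    (fun γ => γ * (δ * h)) '' GammaSet K = (fun γ => γ * h) '' GammaSet K := by
  ext x
  constructor
  · rintro ⟨γ, hγ, rfl⟩
    exact ⟨γ * δ, mul_mem_GammaSet hγ hδ, mul_assoc _ _ _⟩
  · rintro ⟨γ, hγ, rfl⟩
    refine ⟨γ * δ⁻¹, mul_mem_GammaSet hγ (inv_mem_GammaSet hδ), ?_⟩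
    simp [mul_assoc]

/-- If `f` factors through `g` on `s` and `g '' s` is finite, then `f '' s` is finite. -/
lemma finite_image_factor {α β γ' : Type*} [Nonempty β] (f : α → β) (g : α → γ') (s : Set α)
    (hfin : (g '' s).Finite)
    (hfac : ∀ a ∈ s, ∀ a' ∈ s, g a = g a' → f a = f a') : (f '' s).Finite := by
  classical
  set F : γ' → β := fun c =>
    if h : ∃ a ∈ s, g a = c then f h.choose else Classical.arbitrary β with hF
  apply (hfin.image F).subset
  rintro _ ⟨a, ha, rfl⟩
  refine ⟨g a, ⟨a, ha, rfl⟩, ?_⟩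
  have hex : ∃ a' ∈ s, g a' = g a := ⟨a, ha, rfl⟩
  simp only [hF, dif_pos hex]
  exact hfac _ hex.choose_spec.1 a ha hex.choose_spec.2

variable [NumberField K]

open Classical in
/-- Send `x : K` to the corresponding element of `𝓞 K` if it is integral, else `0`. -/
noncomputable def mkO (x : K) : 𝓞 K :=
  if h : IsIntegral ℤ x then ⟨x, h⟩ else 0

lemma mkO_eq {x : K} (h : IsIntegral ℤ x) : mkO x = ⟨x, h⟩ := dif_pos h

lemma exists_den (x : K) : ∃ c : 𝓞 K, c ≠ 0 ∧ IsIntegral ℤ ((algebraMap (𝓞 K) K c) * x) := by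
  obtain ⟨p, q, hq, hpq⟩ := IsFractionRing.div_surjective (A := 𝓞 K) x
  have hq0 : q ≠ 0 := nonZeroDivisors.ne_zero hq
  refine ⟨q, hq0, ?_⟩
  have hqK : algebraMap (𝓞 K) K q ≠ 0 := RingOfIntegers.coe_ne_zero_iff.mpr hq0
  have : algebraMap (𝓞 K) K q * x = algebraMap (𝓞 K) K p := by
    rw [← hpq]; field_simp
  rw [this]
  exact RingOfIntegers.isIntegral_coe p

lemma sub_eq_of_mk_eq (c : 𝓞 K) {x x' : K} (hx : IsIntegral ℤ x) (hx' : IsIntegral ℤ x')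
    (h : Ideal.Quotient.mk (Ideal.span {c}) ⟨x, hx⟩ = Ideal.Quotient.mk (Ideal.span {c}) ⟨x', hx'⟩) :
    ∃ r : 𝓞 K, x - x' = (algebraMap (𝓞 K) K c) * (algebraMap (𝓞 K) K r) := by
  have hmem : ((⟨x, hx⟩ : 𝓞 K) - (⟨x', hx'⟩ : 𝓞 K) : 𝓞 K) ∈ Ideal.span {c} := (Ideal.Quotient.eq (I := Ideal.span {c})).mp h
  obtain ⟨r, hr⟩ := Ideal.mem_span_singleton.mp hmem
  refine ⟨r, ?_⟩
  have := congrArg (algebraMap (𝓞 K) K) hr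
  exact this

end HeckeAux

/-- `(P_K⁺, P_𝒪⁺)` is a Hecke pair: every double coset `ΓgΓ`, for
`g ∈ P_K⁺` (i.e. `g` an affine transformation with totally positive linear coefficient),
contains only finitely many left cosets and finitely many right cosets of `Γ = P_𝒪⁺`. -/
theorem heckePair_PK_PO (K : Type*) [Field K] [NumberField K]
    (g : AffPair K) (hg : TotallyPositive K (g.a : K)) :
    (leftCosetsIn K g).Finite ∧ (rightCosetsIn K g).Finite := by
  classical
  obtain ⟨c₁, hc₁0, hc₁⟩ := exists_den ((g.a : K))
  obtain ⟨c₂, hc₂0, hc₂⟩ := exists_den (g.b)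
  obtain ⟨c₃, hc₃0, hc₃⟩ := exists_den (((g.a : K))⁻¹)
  obtain ⟨c₄, hc₄0, hc₄⟩ := exists_den (g.b * ((g.a : K))⁻¹)
  set c : NumberField.RingOfIntegers K := c₁ * c₂ * c₃ * c₄ with hc
  have hc0 : c ≠ 0 := by
    simp only [hc]
    exact mul_ne_zero (mul_ne_zero (mul_ne_zero hc₁0 hc₂0) hc₃0) hc₄0
  set cK : K := algebraMap (NumberField.RingOfIntegers K) K c with hcKdef
  have hcK0 : cK ≠ 0 := NumberField.RingOfIntegers.coe_ne_zero_iff.mpr hc0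
  have ha0 : (g.a : K) ≠ 0 := Units.ne_zero _
  have hca : IsIntegral ℤ (cK * (g.a : K)) := by
    have : cK * (g.a : K)
        = algebraMap (NumberField.RingOfIntegers K) K (c₂ * c₃ * c₄)
          * (algebraMap (NumberField.RingOfIntegers K) K c₁ * (g.a : K)) := by
      simp only [hcKdef, hc, map_mul]; ring
    rw [this]
    exact (NumberField.RingOfIntegers.isIntegral_coe _).mul hc₁
  have hcb : IsIntegral ℤ (cK * g.b) := by
    have : cK * g.b
        = algebraMap (NumberField.RingOfIntegers K) K (c₁ * c₃ * c₄)
          * (algebraMap (NumberField.RingOfIntegers K) K c₂ * g.b) := by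
      simp only [hcKdef, hc, map_mul]; ring
    rw [this]
    exact (NumberField.RingOfIntegers.isIntegral_coe _).mul hc₂
  have hcai : IsIntegral ℤ (cK * ((g.a : K))⁻¹) := by
    have : cK * ((g.a : K))⁻¹
        = algebraMap (NumberField.RingOfIntegers K) K (c₁ * c₂ * c₄)
          * (algebraMap (NumberField.RingOfIntegers K) K c₃ * ((g.a : K))⁻¹) := by
      simp only [hcKdef, hc, map_mul]; ring
    rw [this]
    exact (NumberField.RingOfIntegers.isIntegral_coe _).mul hc₃
  have hcbai : IsIntegral ℤ (cK * g.b * ((g.a : K))⁻¹) := by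
    have : cK * g.b * ((g.a : K))⁻¹
        = algebraMap (NumberField.RingOfIntegers K) K (c₁ * c₂ * c₃)
          * (algebraMap (NumberField.RingOfIntegers K) K c₄ * (g.b * ((g.a : K))⁻¹)) := by
      simp only [hcKdef, hc, map_mul]; ring
    rw [this]
    exact (NumberField.RingOfIntegers.isIntegral_coe _).mul hc₄
  set I : Ideal (NumberField.RingOfIntegers K) := Ideal.span {c} with hI
  haveI : Fintype (NumberField.RingOfIntegers K ⧸ I) :=
    @Fintype.ofFinite _ (Ideal.finiteQuotientOfFreeOfNeBot I (by
      simp only [hI, ne_eq, Ideal.span_singleton_eq_bot]; exact hc0))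
  set gmap : AffPair K → (NumberField.RingOfIntegers K ⧸ I) × (NumberField.RingOfIntegers K ⧸ I) :=
    fun p => (Ideal.Quotient.mk I (mkO p.b), Ideal.Quotient.mk I (mkO ((p.a : K)))) with hgmap
  have extract : ∀ γ ∈ GammaSet K, ∀ γ' ∈ GammaSet K, gmap γ = gmap γ' →
      ∃ r s : NumberField.RingOfIntegers K,
        γ.b - γ'.b = cK * algebraMap (NumberField.RingOfIntegers K) K r ∧
        (γ.a : K) - (γ'.a : K) = cK * algebraMap (NumberField.RingOfIntegers K) K s := by
    intro γ hγ γ' hγ' h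
    simp only [hgmap, Prod.mk.injEq] at h
    obtain ⟨h1, h2⟩ := h
    rw [mkO_eq hγ.2.2.2, mkO_eq hγ'.2.2.2] at h1
    rw [mkO_eq hγ.2.1, mkO_eq hγ'.2.1] at h2
    obtain ⟨r, hr⟩ := sub_eq_of_mk_eq c hγ.2.2.2 hγ'.2.2.2 h1
    obtain ⟨s, hs⟩ := sub_eq_of_mk_eq c hγ.2.1 hγ'.2.1 h2
    exact ⟨r, s, hr, hs⟩
  constructor
  · -- left cosets
    have hL : leftCosetsIn K g
        = (fun γ₁ => (fun γ => γ₁ * g * γ) '' GammaSet K) '' GammaSet K := by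
      ext C
      constructor
      · rintro ⟨h, ⟨γ₁, hγ₁, γ₂, hγ₂, rfl⟩, rfl⟩
        exact ⟨γ₁, hγ₁, (left_coset_mul (γ₁ * g) hγ₂).symm⟩
      · rintro ⟨γ₁, hγ₁, rfl⟩
        exact ⟨γ₁ * g, ⟨γ₁, hγ₁, 1, one_mem_GammaSet, (mul_one _).symm⟩, rfl⟩
    rw [hL]
    have hQfin : (gmap '' GammaSet K).Finite := by
      haveI : Finite (NumberField.RingOfIntegers K ⧸ I) := Finite.of_fintype _
      exact Set.Finite.subset Set.finite_univ (Set.subset_univ _)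
    apply finite_image_factor _ gmap _ hQfin
    intro γ₁ h1 γ₁' h1' heq
    obtain ⟨r, s, hr, hs⟩ := extract γ₁ h1 γ₁' h1' heq
    set δ : AffPair K := g⁻¹ * γ₁'⁻¹ * γ₁ * g with hδdef
    have hu'0 : (γ₁'.a : K) ≠ 0 := Units.ne_zero _
    have hδa : ((δ.a : Kˣ) : K) = ((γ₁'.a : K))⁻¹ * (γ₁.a : K) := by
      simp only [hδdef, AffPair.mul_a, AffPair.inv_a, Units.val_mul, Units.val_inv_eq_inv_val]
      field_simp
      try ring
    have hδainv : (((δ.a)⁻¹ : Kˣ) : K) = ((γ₁.a : K))⁻¹ * (γ₁'.a : K) := by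
      simp only [hδdef, AffPair.mul_a, AffPair.inv_a, Units.val_mul, Units.val_inv_eq_inv_val,
        mul_inv, inv_inv]
      field_simp
      try ring
    have hrr : algebraMap (NumberField.RingOfIntegers K) K r = (γ₁.b - γ₁'.b) / cK := by
      rw [eq_div_iff hcK0]; linear_combination -hr
    have hss : algebraMap (NumberField.RingOfIntegers K) K s
        = ((γ₁.a : K) - (γ₁'.a : K)) / cK := by
      rw [eq_div_iff hcK0]; linear_combination -hs
    have hδb : δ.b = ((γ₁'.a : K))⁻¹ *
        ((cK * ((g.a : K))⁻¹) * algebraMap (NumberField.RingOfIntegers K) K r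
          + (cK * g.b * ((g.a : K))⁻¹) * algebraMap (NumberField.RingOfIntegers K) K s) := by
      rw [hrr, hss]
      simp only [hδdef, AffPair.mul_b, AffPair.mul_a, AffPair.inv_b, AffPair.inv_a,
        Units.val_mul, Units.val_inv_eq_inv_val]
      field_simp
      ring
    have hδ : δ ∈ GammaSet K := by
      have hu'i : IsIntegral ℤ (((γ₁'.a : K))⁻¹) := by
        have := h1'.2.2.1; rwa [Units.val_inv_eq_inv_val] at this
      have hui : IsIntegral ℤ (((γ₁.a : K))⁻¹) := by
        have := h1.2.2.1; rwa [Units.val_inv_eq_inv_val] at this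
      refine ⟨?_, ?_, ?_, ?_⟩
      · rw [hδa]; exact (h1'.1.inv).mul h1.1
      · rw [hδa]; exact hu'i.mul h1.2.1
      · rw [hδainv]; exact hui.mul h1'.2.1
      · rw [hδb]
        exact hu'i.mul ((hcai.mul (NumberField.RingOfIntegers.isIntegral_coe r)).add
          (hcbai.mul (NumberField.RingOfIntegers.isIntegral_coe s)))
    have hδg : γ₁ * g = γ₁' * g * δ := by rw [hδdef]; group
    rw [hδg]
    exact left_coset_mul _ hδ
  · -- right cosets
    have hR : rightCosetsIn K g
        = (fun γ₂ => (fun γ => γ * (g * γ₂)) '' GammaSet K) '' GammaSet K := by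
      ext C
      constructor
      · rintro ⟨h, ⟨γ₁, hγ₁, γ₂, hγ₂, rfl⟩, rfl⟩
        refine ⟨γ₂, hγ₂, ?_⟩
        rw [mul_assoc γ₁ g γ₂]
        exact (right_coset_mul (g * γ₂) hγ₁).symm
      · rintro ⟨γ₂, hγ₂, rfl⟩
        exact ⟨g * γ₂, ⟨1, one_mem_GammaSet, γ₂, hγ₂, by rw [one_mul]⟩, rfl⟩
    rw [hR]
    have hQfin : (gmap '' GammaSet K).Finite := by
      haveI : Finite (NumberField.RingOfIntegers K ⧸ I) := Finite.of_fintype _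
      exact Set.Finite.subset Set.finite_univ (Set.subset_univ _)
    apply finite_image_factor _ gmap _ hQfin
    intro γ₂ h2 γ₂' h2' heq
    obtain ⟨r, s, hr, hs⟩ := extract γ₂ h2 γ₂' h2' heq
    set ε : AffPair K := g * γ₂ * γ₂'⁻¹ * g⁻¹ with hεdef
    have hu'0 : (γ₂'.a : K) ≠ 0 := Units.ne_zero _
    have hεa : ((ε.a : Kˣ) : K) = (γ₂.a : K) * ((γ₂'.a : K))⁻¹ := by
      simp only [hεdef, AffPair.mul_a, AffPair.inv_a, Units.val_mul, Units.val_inv_eq_inv_val]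
      field_simp
      try ring
    have hεainv : (((ε.a)⁻¹ : Kˣ) : K) = ((γ₂.a : K))⁻¹ * (γ₂'.a : K) := by
      simp only [hεdef, AffPair.mul_a, AffPair.inv_a, Units.val_mul, Units.val_inv_eq_inv_val,
        mul_inv, inv_inv]
      field_simp
      try ring
    have hrr : algebraMap (NumberField.RingOfIntegers K) K r = (γ₂.b - γ₂'.b) / cK := by
      rw [eq_div_iff hcK0]; linear_combination -hr
    have hss : algebraMap (NumberField.RingOfIntegers K) K s
        = ((γ₂.a : K) - (γ₂'.a : K)) / cK := by
      rw [eq_div_iff hcK0]; linear_combination -hs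
    have hεb : ε.b = ((γ₂'.a : K))⁻¹ *
        ((cK * (g.a : K)) * ((γ₂'.a : K) * algebraMap (NumberField.RingOfIntegers K) K r
            - algebraMap (NumberField.RingOfIntegers K) K s * γ₂'.b)
          + (cK * g.b) * (-(algebraMap (NumberField.RingOfIntegers K) K s))) := by
      rw [hrr, hss]
      simp only [hεdef, AffPair.mul_b, AffPair.mul_a, AffPair.inv_b, AffPair.inv_a,
        Units.val_mul, Units.val_inv_eq_inv_val]
      field_simp
      ring
    have hε : ε ∈ GammaSet K := by
      have hu'i : IsIntegral ℤ (((γ₂'.a : K))⁻¹) := by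
        have := h2'.2.2.1; rwa [Units.val_inv_eq_inv_val] at this
      have hui : IsIntegral ℤ (((γ₂.a : K))⁻¹) := by
        have := h2.2.2.1; rwa [Units.val_inv_eq_inv_val] at this
      refine ⟨?_, ?_, ?_, ?_⟩
      · rw [hεa]; exact h2.1.mul h2'.1.inv
      · rw [hεa]; exact h2.2.1.mul hu'i
      · rw [hεainv]; exact hui.mul h2'.2.1
      · rw [hεb]
        refine hu'i.mul (IsIntegral.add (hca.mul ?_) (hcb.mul ?_))
        · exact (h2'.2.1.mul (NumberField.RingOfIntegers.isIntegral_coe r)).sub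
            ((NumberField.RingOfIntegers.isIntegral_coe s).mul h2'.2.2.2)
        · exact (NumberField.RingOfIntegers.isIntegral_coe s).neg
    have hεg : g * γ₂ = ε * (g * γ₂') := by rw [hεdef]; group
    rw [hεg]
    exact right_coset_mul _ hε
end

section
/- For r ∈ K let g_r = (1, r) ∈ P_K⁺ and let (𝒪₊*)_r := {u ∈ 𝒪₊* : (u − 1)r ∈ 𝒪}. Then (𝒪₊*)_r is a subgroup of finite index in 𝒪₊*, and the number of right cosets of Γ = P_𝒪⁺ contained in the double coset Γ g_r Γ, i.e. the cardinality of {Γh : h ∈ Γg_rΓ}, equals the index [𝒪₊* : (𝒪₊*)_r], which also equals the cardinality of the orbit {ur + 𝒪 : u ∈ 𝒪₊*} of r + 𝒪 in K/𝒪 under the multiplication action of 𝒪₊*. -/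
/-- The group `𝒪₊*` of totally positive units of the ring of integers of `K`,
as a subgroup of `Kˣ`. -/
def UnitsPos (K : Type*) [Field K] : Subgroup Kˣ where
  carrier := {u : Kˣ | TotallyPositive K (u : K) ∧ IsIntegral ℤ ((u : K)) ∧
    IsIntegral ℤ (((u⁻¹ : Kˣ) : K))}
  one_mem' := by
    refine ⟨fun φ => by simp, by simpa using isIntegral_one, by simpa using isIntegral_one⟩
  mul_mem' := by
    rintro u v ⟨hu1, hu2, hu3⟩ ⟨hv1, hv2, hv3⟩
    refine ⟨fun φ => ?_, ?_, ?_⟩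
    · rw [Units.val_mul, map_mul]
      exact mul_pos (hu1 φ) (hv1 φ)
    · rw [Units.val_mul]
      exact hu2.mul hv2
    · rw [mul_inv_rev, Units.val_mul]
      exact hv3.mul hu3
  inv_mem' := by
    rintro u ⟨h1, h2, h3⟩
    refine ⟨fun φ => ?_, h3, by simpa using h2⟩
    rw [Units.val_inv_eq_inv_val, map_inv₀]
    exact inv_pos.2 (h1 φ)

/-- The subgroup `(𝒪₊*)_r = {u ∈ 𝒪₊* : (u - 1)·r ∈ 𝒪}` of `𝒪₊*`, i.e. the stabilizer of
`r + 𝒪` for the multiplication action of `𝒪₊*` on `K/𝒪`. -/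
def stabSub (K : Type*) [Field K] (r : K) : Subgroup (UnitsPos K) where
  carrier := {u | IsIntegral ℤ ((((u : Kˣ) : K) - 1) * r)}
  one_mem' := by simpa using isIntegral_zero
  mul_mem' := by
    intro u v hu hv
    show IsIntegral ℤ (((((u * v : UnitsPos K) : Kˣ) : K) - 1) * r)
    have key : ((((u * v : UnitsPos K) : Kˣ) : K) - 1) * r
        = (((u : Kˣ) : K)) * (((((v : Kˣ) : K)) - 1) * r) + ((((u : Kˣ) : K) - 1) * r) := by
      push_cast
      ring
    rw [key]
    exact (u.2.2.1.mul hv).add hu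
  inv_mem' := by
    intro u hu
    show IsIntegral ℤ (((((u⁻¹ : UnitsPos K) : Kˣ) : K) - 1) * r)
    have h2 : IsIntegral ℤ ((((u : Kˣ)⁻¹ : Kˣ) : K)) := u.2.2.2
    have key : ((((u⁻¹ : UnitsPos K) : Kˣ) : K) - 1) * r
        = -((((u : Kˣ)⁻¹ : Kˣ) : K)) * ((((u : Kˣ) : K) - 1) * r) := by
      have h0 : ((u : Kˣ) : K) ≠ 0 := Units.ne_zero _
      push_cast [Units.val_inv_eq_inv_val]
      field_simp
      ring
    rw [key]
    exact (h2.neg).mul hu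
  
/-- The ring of integers `𝒪` of `K` as an additive subgroup of `K`. -/
def intAddSubgroup (K : Type*) [Field K] : AddSubgroup K where
  carrier := {x : K | IsIntegral ℤ x}
  zero_mem' := isIntegral_zero
  add_mem' := fun h1 h2 => h1.add h2
  neg_mem' := fun h => h.neg


section AuxProofs

open scoped Classical

variable {K : Type*} [Field K]

lemma mem_intAddSubgroup {x : K} : x ∈ intAddSubgroup K ↔ IsIntegral ℤ x := Iff.rfl

/-- `Γ` as a subgroup of the affine group. -/
def GammaSub (K : Type*) [Field K] : Subgroup (AffPair K) where
  carrier := GammaSet K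
  one_mem' := ⟨fun φ => by simp, by simpa using isIntegral_one, by simpa using isIntegral_one,
    isIntegral_zero⟩
  mul_mem' := by
    rintro p q ⟨hp1, hp2, hp3, hp4⟩ ⟨hq1, hq2, hq3, hq4⟩
    refine ⟨fun φ => ?_, ?_, ?_, ?_⟩
    · rw [AffPair.mul_a, Units.val_mul, map_mul]
      exact mul_pos (hp1 φ) (hq1 φ)
    · rw [AffPair.mul_a, Units.val_mul]
      exact hp2.mul hq2
    · rw [AffPair.mul_a, mul_inv_rev, Units.val_mul]
      exact hq3.mul hp3
    · rw [AffPair.mul_b]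
      exact hp4.add (hp2.mul hq4)
  inv_mem' := by
    rintro p ⟨h1, h2, h3, h4⟩
    refine ⟨fun φ => ?_, by simpa using h3, by simpa using h2, ?_⟩
    · rw [AffPair.inv_a, Units.val_inv_eq_inv_val, map_inv₀]
      exact inv_pos.2 (h1 φ)
    · rw [AffPair.inv_b]
      exact (h3.mul h4).neg

lemma mem_GammaSub {p : AffPair K} : p ∈ GammaSub K ↔ p ∈ GammaSet K := Iff.rfl

lemma coset_eq_iff (h h' : AffPair K) :
    ((fun γ => γ * h) '' GammaSet K = (fun γ => γ * h') '' GammaSet K) ↔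
      h' * h⁻¹ ∈ GammaSet K := by
  constructor
  · intro he
    have h1 : h' ∈ (fun γ => γ * h') '' GammaSet K := ⟨1, (GammaSub K).one_mem, one_mul h'⟩
    rw [← he] at h1
    obtain ⟨γ, hγ, hγh⟩ := h1
    have : h' * h⁻¹ = γ := by rw [← hγh]; group
    rwa [this]
  · intro hc
    ext x
    constructor
    · rintro ⟨γ, hγ, rfl⟩
      refine ⟨γ * (h * h'⁻¹), ?_, by group⟩
      have he : h * h'⁻¹ = (h' * h⁻¹)⁻¹ := by group
      exact (GammaSub K).mul_mem hγ (he ▸ (GammaSub K).inv_mem hc)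
    · rintro ⟨γ, hγ, rfl⟩
      exact ⟨γ * (h' * h⁻¹), (GammaSub K).mul_mem hγ hc, by group⟩

lemma isIntegral_unit_mul_iff (u : Kˣ) (hu : IsIntegral ℤ ((u : Kˣ) : K))
    (hu' : IsIntegral ℤ (((u⁻¹ : Kˣ)) : K)) (x : K) :
    IsIntegral ℤ ((u : K) * x) ↔ IsIntegral ℤ x := by
  constructor
  · intro h
    have h2 := hu'.mul h
    rwa [Units.val_inv_eq_inv_val, inv_mul_cancel_left₀ (Units.ne_zero u)] at h2
  · exact fun h => hu.mul h

lemma dc_a_mem {r : K} {h : AffPair K} (hh : h ∈ doubleCoset K (⟨1, r⟩ : AffPair K)) :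
    h.a ∈ UnitsPos K := by
  obtain ⟨γ₁, ⟨h11, h12, h13, h14⟩, γ₂, ⟨h21, h22, h23, h24⟩, rfl⟩ := hh
  refine ⟨fun φ => ?_, ?_, ?_⟩
  · simp only [AffPair.mul_a, Units.val_mul, Units.val_one, map_mul, map_one, mul_one]
    exact mul_pos (h11 φ) (h21 φ)
  · simp only [AffPair.mul_a, Units.val_mul, Units.val_one, mul_one]
    exact h12.mul h22
  · simp only [AffPair.mul_a, mul_inv_rev, inv_one, Units.val_mul, Units.val_one, one_mul,
      mul_one]
    exact h23.mul h13

lemma dc_invariant {r : K} {h : AffPair K} (hh : h ∈ doubleCoset K (⟨1, r⟩ : AffPair K)) :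
    ∃ u : UnitsPos K,
      IsIntegral ℤ ((((h.a⁻¹ : Kˣ)) : K) * h.b - (((u : Kˣ)) : K) * r) := by
  obtain ⟨γ₁, ⟨h11, h12, h13, h14⟩, γ₂, ⟨h21, h22, h23, h24⟩, rfl⟩ := hh
  refine ⟨(⟨γ₂.a, h21, h22, h23⟩ : UnitsPos K)⁻¹, ?_⟩
  have hA : ((γ₁.a : Kˣ) : K) ≠ 0 := Units.ne_zero _
  have hB : ((γ₂.a : Kˣ) : K) ≠ 0 := Units.ne_zero _
  have key : (((γ₁ * (⟨1, r⟩ : AffPair K) * γ₂).a⁻¹ : Kˣ) : K) *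
        (γ₁ * (⟨1, r⟩ : AffPair K) * γ₂).b -
        ((((⟨γ₂.a, h21, h22, h23⟩ : UnitsPos K)⁻¹ : UnitsPos K) : Kˣ) : K) * r
      = (((γ₂.a⁻¹ : Kˣ)) : K) * ((((γ₁.a⁻¹ : Kˣ)) : K) * γ₁.b)
        + (((γ₂.a⁻¹ : Kˣ)) : K) * γ₂.b := by
    show (((γ₁.a * 1 * γ₂.a)⁻¹ : Kˣ) : K) * ((γ₁.b + (γ₁.a : K) * r)
        + ((γ₁.a * 1 : Kˣ) : K) * γ₂.b) - (((γ₂.a⁻¹ : Kˣ)) : K) * r = _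
    simp only [mul_one, mul_inv_rev, Units.val_mul, Units.val_inv_eq_inv_val]
    field_simp
    ring
  rw [key]
  exact ((h23.mul (h13.mul h14))).add (h23.mul h24)

lemma dc_coset_iff {r : K} {h h' : AffPair K}
    (hh : h ∈ doubleCoset K (⟨1, r⟩ : AffPair K))
    (hh' : h' ∈ doubleCoset K (⟨1, r⟩ : AffPair K)) :
    h' * h⁻¹ ∈ GammaSet K ↔
      IsIntegral ℤ ((((h'.a⁻¹ : Kˣ)) : K) * h'.b - (((h.a⁻¹ : Kˣ)) : K) * h.b) := by
  obtain ⟨ha1, ha2, ha3⟩ := dc_a_mem hh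
  obtain ⟨hb1, hb2, hb3⟩ := dc_a_mem hh'
  have e1 : (((h' * h⁻¹).a : Kˣ) : K) = (h'.a : K) * (((h.a⁻¹ : Kˣ)) : K) := by
    simp [Units.val_mul]
  have key : h'.b + (h'.a : K) * (-((((h.a⁻¹ : Kˣ)) : K) * h.b))
      = (h'.a : K) * (((((h'.a⁻¹ : Kˣ)) : K) * h'.b - (((h.a⁻¹ : Kˣ)) : K) * h.b)) := by
    simp only [Units.val_inv_eq_inv_val]
    field_simp
    ring
  constructor
  · rintro ⟨g1, g2, g3, g4⟩
    rw [AffPair.mul_b, AffPair.inv_b, key] at g4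
    exact (isIntegral_unit_mul_iff h'.a hb2 hb3 _).mp g4
  · intro hI
    refine ⟨fun φ => ?_, ?_, ?_, ?_⟩
    · rw [e1, map_mul, Units.val_inv_eq_inv_val, map_inv₀]
      exact mul_pos (hb1 φ) (inv_pos.2 (ha1 φ))
    · rw [AffPair.mul_a, Units.val_mul, AffPair.inv_a]
      exact hb2.mul ha3
    · rw [AffPair.mul_a, AffPair.inv_a, mul_inv_rev, inv_inv, Units.val_mul]
      exact ha2.mul hb3
    · rw [AffPair.mul_b, AffPair.inv_b, key]
      exact hb2.mul hI

def fmap (K : Type*) [Field K] (r : K) : UnitsPos K → K ⧸ intAddSubgroup K :=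
  fun u => QuotientAddGroup.mk ((((u : Kˣ)) : K) * r)

lemma fmap_eq_iff (r : K) (u v : UnitsPos K) :
    fmap K r u = fmap K r v ↔
      IsIntegral ℤ ((((v : Kˣ)) : K) * r - (((u : Kˣ)) : K) * r) := by
  rw [show fmap K r u = QuotientAddGroup.mk ((((u : Kˣ)) : K) * r) from rfl,
    show fmap K r v = QuotientAddGroup.mk ((((v : Kˣ)) : K) * r) from rfl,
    QuotientAddGroup.eq, neg_add_eq_sub]
  exact Iff.rfl

lemma fmap_eq_iff_mk (r : K) (u v : UnitsPos K) :
    fmap K r u = fmap K r v ↔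
      (QuotientGroup.mk u : UnitsPos K ⧸ stabSub K r) = QuotientGroup.mk v := by
  rw [fmap_eq_iff, QuotientGroup.eq]
  have key : (((u : Kˣ)) : K) * ((((((u⁻¹ * v : UnitsPos K) : Kˣ)) : K) - 1) * r)
      = (((v : Kˣ)) : K) * r - (((u : Kˣ)) : K) * r := by
    have h0 : (((u : Kˣ)) : K) ≠ 0 := Units.ne_zero _
    have e : ((((u⁻¹ * v : UnitsPos K) : Kˣ)) : K) = ((((u : Kˣ)) : K))⁻¹ * (((v : Kˣ)) : K) := by
      push_cast
      ring
    rw [e]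
    field_simp
  constructor
  · intro hI
    show IsIntegral ℤ _
    rw [← isIntegral_unit_mul_iff (u : Kˣ) u.2.2.1 u.2.2.2, key]
    exact hI
  · intro hmem
    have hI : IsIntegral ℤ ((((((u⁻¹ * v : UnitsPos K) : Kˣ)) : K) - 1) * r) := hmem
    rw [← isIntegral_unit_mul_iff (u : Kˣ) u.2.2.1 u.2.2.2, key] at hI
    exact hI

def hAff (r : K) (u : UnitsPos K) : AffPair K := ⟨((u : Kˣ))⁻¹, r⟩

lemma hAff_mem_dc (r : K) (u : UnitsPos K) :
    hAff r u ∈ doubleCoset K (⟨1, r⟩ : AffPair K) := by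
  refine ⟨1, (GammaSub K).one_mem, ⟨(u : Kˣ)⁻¹, 0⟩, ?_, ?_⟩
  · refine ⟨fun φ => ?_, ?_, ?_, isIntegral_zero⟩
    · rw [Units.val_inv_eq_inv_val, map_inv₀]
      exact inv_pos.2 (u.2.1 φ)
    · exact u.2.2.2
    · rw [inv_inv]
      exact u.2.2.1
  · ext <;> simp [hAff]

lemma hAff_inv_invariant (r : K) (u : UnitsPos K) :
    ((((hAff r u).a⁻¹ : Kˣ)) : K) * (hAff r u).b = (((u : Kˣ)) : K) * r := by
  simp [hAff]

lemma W_mem (r : K) (u : UnitsPos K) :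
    (fun γ => γ * hAff r u) '' GammaSet K ∈ rightCosetsIn K (⟨1, r⟩ : AffPair K) :=
  ⟨hAff r u, hAff_mem_dc r u, rfl⟩

def Wmap (r : K) : UnitsPos K → ↥(rightCosetsIn K (⟨1, r⟩ : AffPair K)) :=
  fun u => ⟨_, W_mem r u⟩

lemma Wmap_surjective (r : K) : Function.Surjective (Wmap r) := by
  rintro ⟨C, h, hh, rfl⟩
  obtain ⟨u, hu⟩ := dc_invariant hh
  refine ⟨u, Subtype.ext ?_⟩
  show (fun γ => γ * hAff r u) '' GammaSet K = (fun γ => γ * h) '' GammaSet K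
  rw [coset_eq_iff, dc_coset_iff (hAff_mem_dc r u) hh, hAff_inv_invariant]
  exact hu

lemma Wmap_eq_iff (r : K) (u v : UnitsPos K) :
    Wmap r u = Wmap r v ↔ fmap K r u = fmap K r v := by
  rw [Subtype.ext_iff]
  show ((fun γ => γ * hAff r u) '' GammaSet K = (fun γ => γ * hAff r v) '' GammaSet K) ↔ _
  rw [coset_eq_iff, dc_coset_iff (hAff_mem_dc r u) (hAff_mem_dc r v),
    hAff_inv_invariant, hAff_inv_invariant, fmap_eq_iff]

lemma card_ker {α β γ : Type*} (f : α → β) (g : α → γ) (hg : Function.Surjective g)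
    (h : ∀ a b, f a = f b ↔ g a = g b) : Nat.card (Set.range f) = Nat.card γ := by
  have hk : Setoid.ker f = Setoid.ker g := Setoid.ext h
  calc Nat.card (Set.range f) = Nat.card (Quotient (Setoid.ker f)) :=
        Nat.card_congr (Setoid.quotientKerEquivRange f).symm
    _ = Nat.card (Quotient (Setoid.ker g)) := by rw [hk]
    _ = Nat.card γ := Nat.card_congr (Setoid.quotientKerEquivOfSurjective g hg)

lemma exists_nat_smul_integral (K : Type*) [Field K] [NumberField K] (r : K) :
    ∃ m : ℕ, 0 < m ∧ IsIntegral ℤ ((m : K) * r) := by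
  have halg : IsAlgebraic ℤ r := (IsFractionRing.isAlgebraic_iff ℤ ℚ K).mpr
    (Algebra.IsAlgebraic.isAlgebraic r)
  obtain ⟨y, hy, hyI⟩ := halg.exists_integral_multiple
  refine ⟨y.natAbs, Int.natAbs_pos.mpr hy, ?_⟩
  have hxI : IsIntegral ℤ ((y : K) * r) := by
    simpa [Algebra.smul_def] using hyI
  rcases Int.natAbs_eq y with he | he
  · rw [he] at hxI
    rwa [Int.cast_natCast] at hxI
  · rw [he] at hxI
    rw [Int.cast_neg, Int.cast_natCast, neg_mul] at hxI
    simpa using hxI.neg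

noncomputable def psiHom (K : Type*) [Field K] (c : K) :
    (intAddSubgroup K) →+ K ⧸ intAddSubgroup K :=
  (QuotientAddGroup.mk' _).comp ((AddMonoidHom.mulLeft c).comp (intAddSubgroup K).subtype)

lemma psiHom_apply (c : K) (x : intAddSubgroup K) :
    psiHom K c x = QuotientAddGroup.mk (c * (x : K)) := rfl

def thetaHom (K : Type*) [Field K] : NumberField.RingOfIntegers K →+ (intAddSubgroup K) where
  toFun x := ⟨(x : K), x.isIntegral_coe⟩
  map_zero' := by ext; simp
  map_add' x y := by ext; simp

lemma thetaHom_surjective (K : Type*) [Field K] : Function.Surjective (thetaHom K) :=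
  fun x => ⟨⟨(x : K), (mem_integralClosure_iff ℤ K).mpr x.2⟩, rfl⟩

lemma fg_intAddSubgroup (K : Type*) [Field K] [NumberField K] :
    AddGroup.FG (intAddSubgroup K) := by
  have h1 : Module.Finite ℤ (NumberField.RingOfIntegers K) := inferInstance
  have h2 : AddGroup.FG (NumberField.RingOfIntegers K) := Module.Finite.iff_addGroup_fg.mp h1
  exact AddGroup.fg_of_surjective (thetaHom_surjective K)

lemma range_fmap_finite [NumberField K] (r : K) : (Set.range (fmap K r)).Finite := by
  obtain ⟨m, hm, hr⟩ := exists_nat_smul_integral K r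
  have hm0 : ((m : K)) ≠ 0 := Nat.cast_ne_zero.mpr hm.ne'
  set c : K := ((m : K))⁻¹ with hc
  haveI : AddGroup.FG (intAddSubgroup K) := fg_intAddSubgroup K
  haveI hfgr : AddGroup.FG ↥((psiHom K c).range) := AddGroup.fg_range _
  have htor : AddMonoid.IsTorsion ↥((psiHom K c).range) := by
    rintro ⟨y, x, rfl⟩
    rw [isOfFinAddOrder_iff_nsmul_eq_zero]
    refine ⟨m, hm, ?_⟩
    apply Subtype.ext
    show m • psiHom K c x = 0
    rw [← map_nsmul, psiHom_apply, QuotientAddGroup.eq_zero_iff]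
    have he : c * ((m • x : intAddSubgroup K) : K) = (x : K) := by
      push_cast
      rw [hc, nsmul_eq_mul, inv_mul_cancel_left₀ hm0]
    rw [he]
    exact x.2
  haveI hfin : Finite ↥((psiHom K c).range) := AddCommGroup.finite_of_fg_torsion _ htor
  have hψfin : (Set.range (psiHom K c)).Finite := by
    rw [← AddMonoidHom.coe_range]
    exact Set.toFinite _
  refine hψfin.subset ?_
  rintro _ ⟨u, rfl⟩
  refine ⟨⟨(((u : Kˣ)) : K) * ((m : K) * r), u.2.2.1.mul hr⟩, ?_⟩
  rw [psiHom_apply]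
  congr 1
  rw [hc]
  field_simp

end AuxProofs

/-- For `r ∈ K`, let `g_r = (1, r) ∈ P_K⁺` and
`(𝒪₊*)_r = {u ∈ 𝒪₊* : (u − 1)r ∈ 𝒪}`. Then `(𝒪₊*)_r` has finite index in `𝒪₊*`, and the
number of right cosets of `Γ = P_𝒪⁺` contained in the double coset `Γ g_r Γ` equals the index
`[𝒪₊* : (𝒪₊*)_r]`, which also equals the cardinality of the orbit `{ur + 𝒪 : u ∈ 𝒪₊*}` of
`r + 𝒪` in `K/𝒪` under the multiplication action of `𝒪₊*`. -/
theorem card_rightCosets_eq_index_stab (K : Type*) [Field K] [NumberField K] (r : K) :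
    (stabSub K r).FiniteIndex ∧
      Nat.card ↥(rightCosetsIn K (⟨1, r⟩ : AffPair K)) = (stabSub K r).index ∧
      (stabSub K r).index =
        Nat.card ↥(Set.range fun u : UnitsPos K =>
          (QuotientAddGroup.mk (((u : Kˣ) : K) * r) : K ⧸ intAddSubgroup K)) := by
  classical
  have hfeq : (fun u : UnitsPos K =>
      (QuotientAddGroup.mk (((u : Kˣ) : K) * r) : K ⧸ intAddSubgroup K)) = fmap K r := rfl
  have h3 : (stabSub K r).index = Nat.card ↥(Set.range (fmap K r)) := by
    rw [Subgroup.index]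
    exact (card_ker (fmap K r) (QuotientGroup.mk)
      (QuotientGroup.mk_surjective) (fun a b => fmap_eq_iff_mk r a b)).symm
  have h2 : Nat.card ↥(Set.range (fmap K r)) =
      Nat.card ↥(rightCosetsIn K (⟨1, r⟩ : AffPair K)) :=
    card_ker (fmap K r) (Wmap r) (Wmap_surjective r)
      (fun a b => (Wmap_eq_iff r a b).symm)
  haveI hfin : Finite ↥(Set.range (fmap K r)) := (range_fmap_finite r).to_subtype
  haveI hne : Nonempty ↥(Set.range (fmap K r)) := ⟨⟨fmap K r 1, ⟨1, rfl⟩⟩⟩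
  refine ⟨⟨?_⟩, ?_, ?_⟩
  · rw [h3]
    exact Nat.card_pos.ne'
  · rw [h3, h2]
  · rw [hfeq, h3]
end

section
/- For every g = (x, y) ∈ P_K⁺, writing Γ = P_𝒪⁺, the cardinalities L(g) := |{hΓ : h ∈ ΓgΓ}| and R(g) := |{Γh : h ∈ ΓgΓ}| are finite and satisfy L(g) = N_{K/ℚ}(x) · R(g) as an equality of rational numbers (note N_{K/ℚ}(x) > 0 since x is totally positive); equivalently, the modular function Δ(g) = R(g)/L(g) of the Hecke pair equals N_{K/ℚ}(x)^{-1}. -/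
namespace HeckeAux

open scoped Classical

variable {K : Type*} [Field K]

/-- The additive subgroup of integral elements. -/
def O (K : Type*) [Field K] : AddSubgroup K :=
  (integralClosure ℤ K).toSubring.toAddSubgroup

lemma mem_O {a : K} : a ∈ O K ↔ IsIntegral ℤ a := Iff.rfl

/-- Scaled copy of an additive subgroup. -/
def sm (t : K) (P : AddSubgroup K) : AddSubgroup K :=
  P.map (AddMonoidHom.mulLeft t)

lemma mem_sm {t : K} {P : AddSubgroup K} {a : K} :
    a ∈ sm t P ↔ ∃ b ∈ P, t * b = a := Iff.rfl

lemma sm_sm (s t : K) (P : AddSubgroup K) : sm s (sm t P) = sm (s * t) P := by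
  ext a
  simp only [mem_sm]
  constructor
  · rintro ⟨b, ⟨c, hc, rfl⟩, rfl⟩
    exact ⟨c, hc, by ring⟩
  · rintro ⟨c, hc, rfl⟩
    exact ⟨t * c, ⟨c, hc, rfl⟩, by ring⟩

/-- The set of totally positive units of the ring of integers, as elements of `K`. -/
def Uset (K : Type*) [Field K] : Set K :=
  {u | u ≠ 0 ∧ TotallyPositive K u ∧ IsIntegral ℤ u ∧ IsIntegral ℤ u⁻¹}

lemma Uset.one_mem : (1 : K) ∈ Uset K :=
  ⟨one_ne_zero, fun φ => by simp, isIntegral_one, by simpa using isIntegral_one⟩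

lemma Uset.mul_mem {u v : K} (hu : u ∈ Uset K) (hv : v ∈ Uset K) : u * v ∈ Uset K := by
  obtain ⟨hu0, hup, hui, huj⟩ := hu
  obtain ⟨hv0, hvp, hvi, hvj⟩ := hv
  exact ⟨mul_ne_zero hu0 hv0, fun φ => by
      simpa [map_mul] using mul_pos (hup φ) (hvp φ),
    hui.mul hvi, by rw [mul_inv]; exact huj.mul hvj⟩

lemma Uset.inv_mem {u : K} (hu : u ∈ Uset K) : u⁻¹ ∈ Uset K := by
  obtain ⟨hu0, hup, hui, huj⟩ := hu
  exact ⟨inv_ne_zero hu0, fun φ => by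
      rw [map_inv₀]; exact inv_pos.mpr (hup φ), huj, by simpa using hui⟩

lemma Uset.isIntegral {u : K} (hu : u ∈ Uset K) : IsIntegral ℤ u := hu.2.2.1

lemma Uset.ne_zero {u : K} (hu : u ∈ Uset K) : u ≠ 0 := hu.1

/-- `u * 𝒪 ⊆ 𝒪` for integral `u`; equality for units. -/
lemma sm_O_le_O {u : K} (hu : IsIntegral ℤ u) : sm u (O K) ≤ O K := by
  rintro a ⟨b, hb, rfl⟩
  exact hu.mul hb

lemma O_smul_mem {u a : K} (hu : IsIntegral ℤ u) (ha : a ∈ O K) : u * a ∈ O K := hu.mul ha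

/-- The module `M = 𝒪 + x𝒪`. -/
def Mx (x : K) : AddSubgroup K := O K ⊔ sm x (O K)

lemma O_le_Mx (x : K) : O K ≤ Mx x := le_sup_left
lemma smx_le_Mx (x : K) : sm x (O K) ≤ Mx x := le_sup_right

lemma mem_Mx {x m : K} :
    m ∈ Mx x ↔ ∃ p ∈ O K, ∃ q ∈ O K, m = p + x * q := by
  constructor
  · intro hm
    obtain ⟨p, hp, q, hq, rfl⟩ := AddSubgroup.mem_sup.mp hm
    obtain ⟨b, hb, rfl⟩ := hq
    exact ⟨p, hp, b, hb, rfl⟩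
  · rintro ⟨p, hp, q, hq, rfl⟩
    exact AddSubgroup.mem_sup.mpr ⟨p, hp, x * q, ⟨q, hq, rfl⟩, rfl⟩

lemma Mx_smul {x u m : K} (hu : u ∈ Uset K) (hm : m ∈ Mx x) : u * m ∈ Mx x := by
  obtain ⟨p, hp, q, hq, rfl⟩ := mem_Mx.mp hm
  refine mem_Mx.mpr ⟨u * p, O_smul_mem (Uset.isIntegral hu) hp, u * q, O_smul_mem (Uset.isIntegral hu) hq, by ring⟩

/-- The set `S = U⁺·y + M`. -/
def Sset (x y : K) : Set K := {c | ∃ u ∈ Uset K, ∃ m ∈ Mx x, c = u * y + m}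

lemma Sset_smul {x y u c : K} (hu : u ∈ Uset K) (hc : c ∈ Sset x y) : u * c ∈ Sset x y := by
  obtain ⟨v, hv, m, hm, rfl⟩ := hc
  exact ⟨u * v, Uset.mul_mem hu hv, u * m, Mx_smul hu hm, by ring⟩

lemma mem_GammaSet_iff {p : AffPair K} :
    p ∈ GammaSet K ↔ (p.a : K) ∈ Uset K ∧ IsIntegral ℤ p.b := by
  unfold GammaSet Uset
  simp only [Set.mem_setOf_eq, Units.val_inv_eq_inv_val]
  constructor
  · rintro ⟨h1, h2, h3, h4⟩
    exact ⟨⟨Units.ne_zero _, h1, h2, h3⟩, h4⟩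
  · rintro ⟨⟨h0, h1, h2, h3⟩, h4⟩
    exact ⟨h1, h2, h3, h4⟩

end HeckeAux
namespace HeckeAux

variable {K : Type*} [Field K]

section Cosets

variable (g : AffPair K)

local notation "x" => ((g.a : K))
local notation "y" => (g.b)

lemma dc_eq :
    doubleCoset K g = {h : AffPair K | (x)⁻¹ * (h.a : K) ∈ Uset K ∧ h.b ∈ Sset x y} := by
  have hx : (x) ≠ 0 := Units.ne_zero g.a
  ext h
  constructor
  · rintro ⟨γ₁, hγ₁, γ₂, hγ₂, rfl⟩
    obtain ⟨hu₁, hb₁⟩ := mem_GammaSet_iff.mp hγ₁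
    obtain ⟨hu₂, hb₂⟩ := mem_GammaSet_iff.mp hγ₂
    constructor
    · have : ((x))⁻¹ * ((γ₁ * g * γ₂).a : K) = (γ₁.a : K) * (γ₂.a : K) := by
        push_cast [AffPair.mul_a]
        field_simp
        try ring
      rw [this]
      exact Uset.mul_mem hu₁ hu₂
    · have hb : (γ₁ * g * γ₂).b = (γ₁.a : K) * y + (γ₁.b + (x) * ((γ₁.a : K) * γ₂.b)) := by
        simp [AffPair.mul_b, AffPair.mul_a]
        ring
      rw [hb]
      exact ⟨(γ₁.a : K), hu₁, _,
        mem_Mx.mpr ⟨γ₁.b, hb₁, (γ₁.a : K) * γ₂.b, O_smul_mem (Uset.isIntegral hu₁) hb₂, rfl⟩, rfl⟩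
  · rintro ⟨hw, u, hu, m, hm, hb⟩
    set w := (x)⁻¹ * (h.a : K) with hwdef
    obtain ⟨p, hp, q, hq, rfl⟩ := mem_Mx.mp hm
    have hu0 : u ≠ 0 := Uset.ne_zero hu
    have hw0 : w ≠ 0 := Uset.ne_zero hw
    refine ⟨⟨Units.mk0 u hu0, p⟩, mem_GammaSet_iff.mpr ⟨hu, hp⟩,
      ⟨Units.mk0 (u⁻¹ * w) (mul_ne_zero (inv_ne_zero hu0) hw0), u⁻¹ * q⟩,
      mem_GammaSet_iff.mpr ⟨Uset.mul_mem (Uset.inv_mem hu) hw, O_smul_mem (Uset.isIntegral (Uset.inv_mem hu)) hq⟩, ?_⟩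
    ext
    · show (h.a : K) = _
      simp only [AffPair.mul_a, Units.val_mul, Units.val_mk0]
      rw [hwdef]
      field_simp
      try ring
    · show h.b = _
      simp only [AffPair.mul_b, AffPair.mul_a, Units.val_mul, Units.val_mk0]
      rw [hb]
      field_simp
      ring

/-- Left coset shape. -/
def LC (x₀ c : K) : Set (AffPair K) :=
  {p : AffPair K | x₀⁻¹ * (p.a : K) ∈ Uset K ∧ p.b - c ∈ sm x₀ (O K)}

/-- Right coset shape. -/
def RC (x₀ e : K) : Set (AffPair K) :=
  {p : AffPair K | x₀⁻¹ * (p.a : K) ∈ Uset K ∧ (x₀⁻¹ * (p.a : K))⁻¹ * p.b - e ∈ O K}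

lemma leftCoset_eq {h : AffPair K} (hh : (x)⁻¹ * (h.a : K) ∈ Uset K) :
    (fun γ => h * γ) '' GammaSet K = LC x h.b := by
  have hx : (x) ≠ 0 := Units.ne_zero g.a
  have hha : (h.a : K) = (x) * ((x)⁻¹ * (h.a : K)) := by field_simp
  ext p
  constructor
  · rintro ⟨γ, hγ, rfl⟩
    obtain ⟨hu, hb⟩ := mem_GammaSet_iff.mp hγ
    constructor
    · have : (x)⁻¹ * ((h * γ).a : K) = ((x)⁻¹ * (h.a : K)) * (γ.a : K) := by
        push_cast [AffPair.mul_a]; ring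
      rw [this]; exact Uset.mul_mem hh hu
    · show (h * γ).b - h.b ∈ _
      simp only [AffPair.mul_b]
      refine mem_sm.mpr ⟨((x)⁻¹ * (h.a : K)) * γ.b,
        O_smul_mem (Uset.isIntegral hh) hb, ?_⟩
      field_simp
      try ring
  · rintro ⟨hpa, hpb⟩
    refine ⟨h⁻¹ * p, ?_, by group⟩
    refine mem_GammaSet_iff.mpr ⟨?_, ?_⟩
    · have : ((h⁻¹ * p).a : K) = ((x)⁻¹ * (h.a : K))⁻¹ * ((x)⁻¹ * (p.a : K)) := by
        push_cast [AffPair.mul_a, AffPair.inv_a]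
        field_simp
        try ring
      rw [this]
      exact Uset.mul_mem (Uset.inv_mem hh) hpa
    · obtain ⟨d, hd, hdd⟩ := mem_sm.mp hpb
      have h2 : (h⁻¹ * p).b = (h.a : K)⁻¹ * (p.b - h.b) := by
        simp only [AffPair.mul_b, AffPair.inv_b, AffPair.inv_a, Units.val_inv_eq_inv_val]
        ring
      have ha0 : (h.a : K) ≠ 0 := Units.ne_zero h.a
      have h3 : (h⁻¹ * p).b = ((x)⁻¹ * (h.a : K))⁻¹ * d := by
        rw [h2, ← hdd]
        field_simp
        try ring
      rw [h3]
      exact O_smul_mem (Uset.isIntegral (Uset.inv_mem hh)) hd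

lemma rightCoset_eq {h : AffPair K} (hh : (x)⁻¹ * (h.a : K) ∈ Uset K) :
    (fun γ => γ * h) '' GammaSet K = RC x (((x)⁻¹ * (h.a : K))⁻¹ * h.b) := by
  have hx : (x) ≠ 0 := Units.ne_zero g.a
  have ha0 : (h.a : K) ≠ 0 := Units.ne_zero h.a
  set w := (x)⁻¹ * (h.a : K) with hwdef
  have hw0 : w ≠ 0 := Uset.ne_zero hh
  ext p
  constructor
  · rintro ⟨γ, hγ, rfl⟩
    obtain ⟨hu, hb⟩ := mem_GammaSet_iff.mp hγ
    have hva : (x)⁻¹ * ((γ * h).a : K) = (γ.a : K) * w := by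
      push_cast [AffPair.mul_a]; rw [hwdef]; ring
    constructor
    · rw [hva]; exact Uset.mul_mem hu hh
    · show ((x)⁻¹ * ((γ * h).a : K))⁻¹ * (γ * h).b - w⁻¹ * h.b ∈ _
      rw [hva]
      simp only [AffPair.mul_b]
      have hu0 : (γ.a : K) ≠ 0 := Units.ne_zero γ.a
      have : ((γ.a : K) * w)⁻¹ * (γ.b + (γ.a : K) * h.b) - w⁻¹ * h.b
          = ((γ.a : K) * w)⁻¹ * γ.b := by field_simp; ring
      rw [this]
      exact O_smul_mem (Uset.isIntegral (Uset.inv_mem (Uset.mul_mem hu hh))) hb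
  · rintro ⟨hpa, hpb⟩
    set v := (x)⁻¹ * (p.a : K) with hvdef
    have hv0 : v ≠ 0 := Uset.ne_zero hpa
    refine ⟨p * h⁻¹, ?_, by group⟩
    refine mem_GammaSet_iff.mpr ⟨?_, ?_⟩
    · have : ((p * h⁻¹).a : K) = v * w⁻¹ := by
        push_cast [AffPair.mul_a, AffPair.inv_a]
        rw [hvdef, hwdef]
        field_simp
      rw [this]
      exact Uset.mul_mem hpa (Uset.inv_mem hh)
    · have : (p * h⁻¹).b = v * (v⁻¹ * p.b - w⁻¹ * h.b) := by
        simp only [AffPair.mul_b, AffPair.inv_b, AffPair.inv_a, Units.val_inv_eq_inv_val]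
        rw [hvdef, hwdef]
        field_simp
        ring
      rw [this]
      exact O_smul_mem (Uset.isIntegral hpa) hpb

lemma LC_eq_iff {c c' : K} (hx : (x) ≠ 0) :
    LC x c = LC x c' ↔ c - c' ∈ sm x (O K) := by
  constructor
  · intro hset
    have hmem : (⟨g.a, c⟩ : AffPair K) ∈ LC x c :=
      ⟨by rw [inv_mul_cancel₀ hx]; exact Uset.one_mem, by simpa using (sm x (O K)).zero_mem⟩
    rw [hset] at hmem
    simpa using hmem.2
  · intro hcc
    ext p
    simp only [LC, Set.mem_setOf_eq]
    constructor
    · rintro ⟨h1, h2⟩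
      exact ⟨h1, by simpa using add_mem h2 hcc⟩
    · rintro ⟨h1, h2⟩
      have := add_mem h2 (neg_mem hcc)
      exact ⟨h1, by simpa using this⟩

lemma RC_eq_iff {e e' : K} (hx : (x) ≠ 0) :
    RC x e = RC x e' ↔ e - e' ∈ O K := by
  constructor
  · intro hset
    have hmem : (⟨g.a, e⟩ : AffPair K) ∈ RC x e := by
      refine ⟨by rw [inv_mul_cancel₀ hx]; exact Uset.one_mem, ?_⟩
      show ((x)⁻¹ * (x))⁻¹ * e - e ∈ _
      rw [inv_mul_cancel₀ hx]
      simpa using (O K).zero_mem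
    rw [hset] at hmem
    have := hmem.2
    show e - e' ∈ O K
    simpa [inv_mul_cancel₀ hx] using this
  · intro hee
    ext p
    simp only [RC, Set.mem_setOf_eq]
    constructor
    · rintro ⟨h1, h2⟩
      exact ⟨h1, by simpa [sub_add_sub_cancel] using add_mem h2 hee⟩
    · rintro ⟨h1, h2⟩
      have := add_mem h2 (neg_mem hee)
      exact ⟨h1, by simpa [sub_add_sub_cancel] using this⟩

lemma leftCosetsIn_eq :
    leftCosetsIn K g = LC x '' Sset x y := by
  have hx : (x) ≠ 0 := Units.ne_zero g.a
  ext C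
  constructor
  · rintro ⟨h, hh, rfl⟩
    rw [dc_eq] at hh
    exact ⟨h.b, hh.2, (leftCoset_eq g hh.1).symm⟩
  · rintro ⟨c, hc, rfl⟩
    refine ⟨⟨g.a, c⟩, ?_, ?_⟩
    · rw [dc_eq]
      exact ⟨by rw [inv_mul_cancel₀ hx]; exact Uset.one_mem, hc⟩
    · exact (leftCoset_eq g (h := ⟨g.a, c⟩)
        (by rw [inv_mul_cancel₀ hx]; exact Uset.one_mem)).symm

lemma rightCosetsIn_eq :
    rightCosetsIn K g = RC x '' Sset x y := by
  have hx : (x) ≠ 0 := Units.ne_zero g.a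
  ext C
  constructor
  · rintro ⟨h, hh, rfl⟩
    rw [dc_eq] at hh
    refine ⟨((x)⁻¹ * (h.a : K))⁻¹ * h.b, Sset_smul (Uset.inv_mem hh.1) hh.2, ?_⟩
    exact (rightCoset_eq g hh.1).symm
  · rintro ⟨e, he, rfl⟩
    refine ⟨⟨g.a, e⟩, ?_, ?_⟩
    · rw [dc_eq]
      exact ⟨by rw [inv_mul_cancel₀ hx]; exact Uset.one_mem, he⟩
    · have h1 : (x)⁻¹ * ((⟨g.a, e⟩ : AffPair K).a : K) ∈ Uset K := by
        rw [inv_mul_cancel₀ hx]; exact Uset.one_mem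
      have h2 : ((x)⁻¹ * ((⟨g.a, e⟩ : AffPair K).a : K))⁻¹ * (⟨g.a, e⟩ : AffPair K).b = e := by
        show ((x)⁻¹ * (x))⁻¹ * e = e
        rw [inv_mul_cancel₀ hx]
        simp
      rw [rightCoset_eq g h1, h2]

end Cosets

end HeckeAux
namespace HeckeAux

variable {K : Type*} [Field K]

lemma mk_eq_iff {P : AddSubgroup K} {c c' : K} :
    (QuotientAddGroup.mk c : K ⧸ P) = QuotientAddGroup.mk c' ↔ c - c' ∈ P := by
  rw [QuotientAddGroup.eq]
  constructor
  · intro h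
    have := neg_mem h
    simpa [neg_add_rev, sub_eq_add_neg, add_comm] using this
  · intro h
    have := neg_mem h
    simpa [sub_eq_add_neg, add_comm] using this

/-- If two maps have the same fibers on `s`, their images of `s` are equinumerous. -/
noncomputable def imageEquivOfKer {α β γ : Type*} (f : α → β) (g : α → γ) (s : Set α)
    (h : ∀ a ∈ s, ∀ b ∈ s, (f a = f b ↔ g a = g b)) : ↥(f '' s) ≃ ↥(g '' s) where
  toFun q := ⟨g q.2.choose, ⟨q.2.choose, q.2.choose_spec.1, rfl⟩⟩
  invFun q := ⟨f q.2.choose, ⟨q.2.choose, q.2.choose_spec.1, rfl⟩⟩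
  left_inv := by
    rintro ⟨v, hv⟩
    obtain ⟨has, hfa⟩ := hv.choose_spec
    apply Subtype.ext
    show f (Exists.choose _) = v
    have h2 := (⟨hv.choose, has, rfl⟩ : g hv.choose ∈ g '' s).choose_spec
    exact ((h _ h2.1 _ has).mpr h2.2).trans hfa
  right_inv := by
    rintro ⟨v, hv⟩
    obtain ⟨has, hga⟩ := hv.choose_spec
    apply Subtype.ext
    show g (Exists.choose _) = v
    have h2 := (⟨hv.choose, has, rfl⟩ : f hv.choose ∈ f '' s).choose_spec
    exact ((h _ h2.1 _ has).mp h2.2).trans hga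

/-- Image of a subgroup `Mm` in `K ⧸ P` is equivalent to the quotient `Mm ⧸ (P ⊓ Mm)`. -/
noncomputable def imageQuotEquiv (P Mm : AddSubgroup K) :
    ↥(QuotientAddGroup.mk '' (Mm : Set K) : Set (K ⧸ P)) ≃ (↥Mm ⧸ P.addSubgroupOf Mm) := by
  refine Equiv.ofBijective
    (fun q => QuotientAddGroup.mk ⟨q.2.choose, q.2.choose_spec.1⟩) ⟨?_, ?_⟩
  · rintro ⟨v, hv⟩ ⟨v', hv'⟩ hq
    have h1 := hv.choose_spec
    have h2 := hv'.choose_spec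
    apply Subtype.ext
    show v = v'
    have hP : -hv.choose + hv'.choose ∈ P := by
      simpa [AddSubgroup.mem_addSubgroupOf] using (QuotientAddGroup.eq.mp hq)
    exact h1.2.symm.trans ((QuotientAddGroup.eq.mpr hP).trans h2.2)
  · intro z
    obtain ⟨⟨m, hm⟩, rfl⟩ := QuotientAddGroup.mk_surjective z
    have hv : (QuotientAddGroup.mk m : K ⧸ P) ∈ QuotientAddGroup.mk '' (Mm : Set K) :=
      ⟨m, hm, rfl⟩
    refine ⟨⟨QuotientAddGroup.mk m, hv⟩, ?_⟩
    have hP : -hv.choose + m ∈ P := QuotientAddGroup.eq.mp hv.choose_spec.2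
    exact QuotientAddGroup.eq.mpr (by simpa [AddSubgroup.mem_addSubgroupOf] using hP)

end HeckeAux
namespace HeckeAux

variable {K : Type*} [Field K]

/-- The finite set of translates `u y + M`. -/
def Tset (x y : K) : Set (K ⧸ Mx x) :=
  (fun u => (QuotientAddGroup.mk (u * y) : K ⧸ Mx x)) '' Uset K

lemma mk_mem_Tset {x y c : K} (hc : c ∈ Sset x y) :
    (QuotientAddGroup.mk c : K ⧸ Mx x) ∈ Tset x y := by
  obtain ⟨u, hu, m, hm, rfl⟩ := hc
  exact ⟨u, hu, (mk_eq_iff.mpr (by simpa using hm)).symm⟩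

noncomputable def secU (x y : K) (τ : ↥(Tset x y)) : K := τ.2.choose

lemma secU_mem (x y : K) (τ : ↥(Tset x y)) : secU x y τ ∈ Uset K := τ.2.choose_spec.1

lemma secU_spec (x y : K) (τ : ↥(Tset x y)) :
    (QuotientAddGroup.mk (secU x y τ * y) : K ⧸ Mx x) = τ.1 := τ.2.choose_spec.2

lemma sub_secU_mem {x y c : K} (hc : c ∈ Sset x y) :
    c - secU x y ⟨QuotientAddGroup.mk c, mk_mem_Tset hc⟩ * y ∈ Mx x := by
  have h1 := secU_spec x y ⟨QuotientAddGroup.mk c, mk_mem_Tset hc⟩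
  exact (mk_eq_iff.mp h1.symm)

/-- The key product decomposition of `S / P` for `P ≤ M`. -/
noncomputable def equivProd (x y : K) (P : AddSubgroup K) (hP : P ≤ Mx x) :
    ↥(QuotientAddGroup.mk '' Sset x y : Set (K ⧸ P)) ≃
      ↥(Tset x y) × ↥(QuotientAddGroup.mk '' (Mx x : Set K) : Set (K ⧸ P)) := by
  refine Equiv.ofBijective (fun q =>
    ⟨⟨QuotientAddGroup.mk q.2.choose, mk_mem_Tset q.2.choose_spec.1⟩,
     ⟨QuotientAddGroup.mk (q.2.choose -
        secU x y ⟨QuotientAddGroup.mk q.2.choose, mk_mem_Tset q.2.choose_spec.1⟩ * y),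
      Set.mem_image_of_mem _ (sub_secU_mem q.2.choose_spec.1)⟩⟩) ⟨?_, ?_⟩
  · rintro ⟨v, hv⟩ ⟨v', hv'⟩ h
    obtain ⟨hc, hmkc⟩ := hv.choose_spec
    obtain ⟨hc', hmkc'⟩ := hv'.choose_spec
    have h1 : (QuotientAddGroup.mk hv.choose : K ⧸ Mx x) = QuotientAddGroup.mk hv'.choose :=
      congrArg (fun z => (z.1 : K ⧸ Mx x)) (congrArg Prod.fst h)
    have h2 : secU x y ⟨QuotientAddGroup.mk hv.choose, mk_mem_Tset hc⟩ =
        secU x y ⟨QuotientAddGroup.mk hv'.choose, mk_mem_Tset hc'⟩ :=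
      congrArg (secU x y) (Subtype.ext h1)
    have h3 : (QuotientAddGroup.mk (hv.choose -
          secU x y ⟨QuotientAddGroup.mk hv.choose, mk_mem_Tset hc⟩ * y) : K ⧸ P) =
        QuotientAddGroup.mk (hv'.choose -
          secU x y ⟨QuotientAddGroup.mk hv'.choose, mk_mem_Tset hc'⟩ * y) :=
      congrArg (fun z => (z.1 : K ⧸ P)) (congrArg Prod.snd h)
    rw [← h2] at h3
    have h4 : hv.choose - hv'.choose ∈ P := by
      have := mk_eq_iff.mp h3
      simpa [sub_sub_sub_cancel_right] using this
    apply Subtype.ext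
    exact hmkc.symm.trans ((mk_eq_iff.mpr h4).trans hmkc')
  · rintro ⟨τ, μ⟩
    obtain ⟨hmM, hmkm⟩ := μ.2.choose_spec
    set u := secU x y τ with hu
    set m := μ.2.choose with hm
    have hc : u * y + m ∈ Sset x y := ⟨u, secU_mem x y τ, m, hmM, rfl⟩
    have hq : (QuotientAddGroup.mk (u * y + m) : K ⧸ P) ∈
        QuotientAddGroup.mk '' Sset x y := Set.mem_image_of_mem _ hc
    refine ⟨⟨QuotientAddGroup.mk (u * y + m), hq⟩, ?_⟩
    obtain ⟨hc'', hmkc''⟩ := hq.choose_spec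
    have hPM : hq.choose - (u * y + m) ∈ P := mk_eq_iff.mp hmkc''
    have hMxd : hq.choose - (u * y + m) ∈ Mx x := hP hPM
    have hτ : (⟨QuotientAddGroup.mk hq.choose, mk_mem_Tset hc''⟩ : ↥(Tset x y)) = τ := by
      apply Subtype.ext
      show (QuotientAddGroup.mk hq.choose : K ⧸ Mx x) = τ.1
      have e1 : (QuotientAddGroup.mk hq.choose : K ⧸ Mx x) =
          QuotientAddGroup.mk (u * y + m) := mk_eq_iff.mpr hMxd
      have e2 : (QuotientAddGroup.mk (u * y + m) : K ⧸ Mx x) =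
          QuotientAddGroup.mk (u * y) := mk_eq_iff.mpr (by simpa using hmM)
      exact e1.trans (e2.trans (secU_spec x y τ))
    refine Prod.ext hτ ?_
    apply Subtype.ext
    show (QuotientAddGroup.mk (hq.choose -
        secU x y ⟨QuotientAddGroup.mk hq.choose, mk_mem_Tset hc''⟩ * y) : K ⧸ P) = μ.1
    rw [congrArg (secU x y) hτ]
    have e3 : (QuotientAddGroup.mk (hq.choose - u * y) : K ⧸ P) = QuotientAddGroup.mk m := by
      apply mk_eq_iff.mpr
      have : hq.choose - u * y - m = hq.choose - (u * y + m) := by ring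
      rw [this]
      exact hPM
    exact e3.trans hmkm

end HeckeAux
namespace HeckeAux

variable {K : Type*} [Field K]

lemma relindex_sm (t : K) (ht : t ≠ 0) (P Q : AddSubgroup K) :
    (sm t P).relIndex (sm t Q) = P.relIndex Q := by
  have hinj : Function.Injective (AddMonoidHom.mulLeft t : K →+ K) :=
    fun a b hab => by
      have : t * a = t * b := hab
      exact mul_left_cancel₀ ht this
  have h1 := AddSubgroup.relIndex_comap (AddMonoidHom.mulLeft t) (H := sm t P) Q
  have h2 : AddSubgroup.comap (AddMonoidHom.mulLeft t) (sm t P) = P :=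
    AddSubgroup.comap_map_eq_self_of_injective hinj P
  rw [h2] at h1
  exact h1.symm

section NF

variable [NumberField K]

open NumberField

/-- `𝓞 K` as an additive group is the subgroup `O K`. -/
def OEquiv : 𝓞 K ≃+ ↥(O K) where
  toFun z := ⟨algebraMap (𝓞 K) K z, z.2⟩
  invFun w := ⟨w.1, w.2⟩
  left_inv z := rfl
  right_inv w := rfl
  map_add' z w := by apply Subtype.ext; simp [map_add]

lemma finite_quot_ideal (ν : 𝓞 K) (hν : ν ≠ 0) : Finite (𝓞 K ⧸ Ideal.span {ν}) := by
  have h1 : Ideal.absNorm (Ideal.span {ν}) ≠ 0 := by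
    rw [Ne, Ideal.absNorm_eq_zero_iff, Ideal.span_singleton_eq_bot]
    exact hν
  rw [Ideal.absNorm_apply, Submodule.cardQuot_apply] at h1
  exact Nat.finite_of_card_ne_zero h1

lemma relindex_sm_O (c₀ : 𝓞 K) :
    (sm (c₀ : K) (O K)).relIndex (O K) = Ideal.absNorm (Ideal.span {c₀}) := by
  have hmap : ((Ideal.span {c₀}).toAddSubgroup).map (OEquiv : 𝓞 K ≃+ ↥(O K)) =
      (sm ((c₀ : K)) (O K)).addSubgroupOf (O K) := by
    ext w
    constructor
    · rintro ⟨z, hz, rfl⟩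
      obtain ⟨d, rfl⟩ := Ideal.mem_span_singleton.mp hz
      refine AddSubgroup.mem_addSubgroupOf.mpr (mem_sm.mpr ⟨(algebraMap (𝓞 K) K d), d.2, ?_⟩)
      show (c₀ : K) * _ = (algebraMap (𝓞 K) K (c₀ * d))
      rw [map_mul]
    · intro hw
      obtain ⟨b, hb, hcb⟩ := mem_sm.mp (AddSubgroup.mem_addSubgroupOf.mp hw)
      refine ⟨c₀ * ⟨b, hb⟩, Ideal.mem_span_singleton.mpr ⟨⟨b, hb⟩, rfl⟩, ?_⟩
      apply Subtype.ext
      show algebraMap (𝓞 K) K (c₀ * ⟨b, hb⟩) = (w : K)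
      exact (map_mul _ _ _).trans hcb
  have e := QuotientAddGroup.congr (Ideal.span {c₀}).toAddSubgroup
      ((sm ((c₀ : K)) (O K)).addSubgroupOf (O K)) (OEquiv : 𝓞 K ≃+ ↥(O K)) hmap
  rw [AddSubgroup.relIndex, AddSubgroup.index, Ideal.absNorm_apply, Submodule.cardQuot_apply]
  rw [← Nat.card_congr e.toEquiv]
  rfl

end NF

end HeckeAux
namespace HeckeAux

variable {K : Type*} [Field K]

section NF2

variable [NumberField K]

open NumberField

lemma finite_quot_aux (P Mm : AddSubgroup K) (f : 𝓞 K × 𝓞 K → K)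
    (hf : ∀ p, f p ∈ Mm) (hsurj : ∀ m ∈ Mm, ∃ p, f p = m) (ν : 𝓞 K) (hν : ν ≠ 0)
    (hker : ∀ p q : 𝓞 K × 𝓞 K, ν ∣ (p.1 - q.1) → ν ∣ (p.2 - q.2) → f p - f q ∈ P) :
    Finite (↥Mm ⧸ P.addSubgroupOf Mm) := by
  have : Finite (𝓞 K ⧸ Ideal.span {ν}) := finite_quot_ideal ν hν
  set I := Ideal.span {ν} with hI
  refine Finite.of_surjective
    (fun w : (𝓞 K ⧸ I) × (𝓞 K ⧸ I) =>
      (QuotientAddGroup.mk ⟨f (w.1.out, w.2.out), hf _⟩ : ↥Mm ⧸ P.addSubgroupOf Mm)) ?_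
  intro z
  obtain ⟨⟨m, hm⟩, rfl⟩ := QuotientAddGroup.mk_surjective z
  obtain ⟨p, hp⟩ := hsurj m hm
  refine ⟨(Submodule.Quotient.mk p.1, Submodule.Quotient.mk p.2), ?_⟩
  have h1 : ((Submodule.Quotient.mk p.1 : 𝓞 K ⧸ I).out) - p.1 ∈ I := by
    rw [← Submodule.Quotient.eq]
    exact Quotient.out_eq _
  have h2 : ((Submodule.Quotient.mk p.2 : 𝓞 K ⧸ I).out) - p.2 ∈ I := by
    rw [← Submodule.Quotient.eq]
    exact Quotient.out_eq _
  have hd : f ((Submodule.Quotient.mk p.1 : 𝓞 K ⧸ I).out,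
      (Submodule.Quotient.mk p.2 : 𝓞 K ⧸ I).out) - f p ∈ P :=
    hker _ _ (Ideal.mem_span_singleton.mp h1) (Ideal.mem_span_singleton.mp h2)
  apply QuotientAddGroup.eq.mpr
  apply AddSubgroup.mem_addSubgroupOf.mpr
  show -(f _) + m ∈ P
  rw [← hp]
  have := neg_mem hd
  simpa [sub_eq_add_neg, add_comm] using this

lemma exists_denom (z : K) :
    ∃ ν : K, ν ≠ 0 ∧ TotallyPositive K ν ∧ IsIntegral ℤ ν ∧ IsIntegral ℤ (ν * z) := by
  have halg : IsAlgebraic ℤ z := by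
    rw [IsFractionRing.isAlgebraic_iff ℤ ℚ K]
    exact (IsAlgebraic.of_finite ℚ z)
  obtain ⟨n, hn, hw⟩ := halg.exists_integral_multiple
  have hncast : algebraMap ℤ K n = (n : K) := by simp [algebraMap_int_eq]
  have hn0 : (n : K) ≠ 0 := Int.cast_ne_zero.mpr hn
  refine ⟨(n : K) * (n : K), mul_ne_zero hn0 hn0, ?_, ?_, ?_⟩
  · intro φ
    have : φ ((n : K) * (n : K)) = (n : ℝ) * (n : ℝ) := by
      rw [map_mul, map_intCast]
    rw [this]
    exact mul_self_pos.mpr (Int.cast_ne_zero.mpr hn)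
  · have : ((n : K) * (n : K)) = algebraMap ℤ K (n * n) := by
      rw [algebraMap_int_eq]
      show ((n : K)) * ((n : K)) = ((n * n : ℤ) : K)
      push_cast
      ring
    rw [this]
    exact isIntegral_algebraMap
  · have h1 : IsIntegral ℤ ((n : K) * z) := by
      rw [← hncast, ← Algebra.smul_def]
      exact hw
    have h2 : IsIntegral ℤ ((n : K)) := by
      rw [← hncast]
      exact isIntegral_algebraMap
    have : (n : K) * (n : K) * z = (n : K) * ((n : K) * z) := by ring
    rw [this]
    exact h2.mul h1

end NF2

end HeckeAux
namespace HeckeAux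

variable {K : Type*} [Field K]

section NormPos

variable [NumberField K]

/-- Conjugation on complex embeddings. -/
noncomputable def conjAH (σ : K →ₐ[ℚ] ℂ) : K →ₐ[ℚ] ℂ where
  toRingHom := (starRingEnd ℂ).comp σ.toRingHom
  commutes' := fun r => by simp

lemma conjAH_apply (σ : K →ₐ[ℚ] ℂ) (k : K) : conjAH σ k = starRingEnd ℂ (σ k) := rfl

lemma conjAH_conjAH (σ : K →ₐ[ℚ] ℂ) : conjAH (conjAH σ) = σ :=
  AlgHom.ext fun k => by simp [conjAH_apply]

lemma norm_pos {x : K} (hx : x ≠ 0) (hpos : TotallyPositive K x) :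
    0 < Algebra.norm ℚ x := by
  classical
  have hσx : ∀ σ : K →ₐ[ℚ] ℂ, σ x ≠ 0 := by
    intro σ h
    exact hx (σ.toRingHom.injective (by simpa using h))
  have key : ∀ s : Finset (K →ₐ[ℚ] ℂ), (∀ σ ∈ s, conjAH σ ∈ s) →
      0 < (∏ σ ∈ s, σ x).re ∧ (∏ σ ∈ s, σ x).im = 0 := by
    intro s
    induction s using Finset.strongInduction with
    | _ s ih =>
      intro hstab
      rcases s.eq_empty_or_nonempty with rfl | ⟨σ, hσ⟩
      · simp
      by_cases hcs : conjAH σ = σ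
      · have him : ∀ k, (σ k).im = 0 := by
          intro k
          have h1 := AlgHom.congr_fun hcs k
          rw [conjAH_apply] at h1
          exact Complex.conj_eq_iff_im.mp h1
        have hφ : 0 < (σ x).re := by
          exact hpos
            { toFun := fun k => (σ k).re
              map_one' := by simp
              map_mul' := fun a b => by simp [Complex.mul_re, him]
              map_zero' := by simp
              map_add' := fun a b => by simp }
        have hrec := ih (s.erase σ) (Finset.erase_ssubset hσ) (by
          intro τ hτ
          rcases Finset.mem_erase.mp hτ with ⟨hne, hmem⟩
          refine Finset.mem_erase.mpr ⟨?_, hstab τ hmem⟩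
          intro h
          exact hne (by rw [← conjAH_conjAH τ, h, hcs]))
        rw [← Finset.mul_prod_erase s _ hσ]
        constructor
        · rw [Complex.mul_re, him x, hrec.2]
          simpa using mul_pos hφ hrec.1
        · rw [Complex.mul_im, him x, hrec.2]
          simp
      · have hcm : conjAH σ ∈ s.erase σ := Finset.mem_erase.mpr ⟨hcs, hstab σ hσ⟩
        have hrec := ih ((s.erase σ).erase (conjAH σ))
          (Finset.ssubset_of_subset_of_ssubset (Finset.erase_subset _ _)
            (Finset.erase_ssubset hσ)) (by
          intro τ hτ
          rcases Finset.mem_erase.mp hτ with ⟨hne2, hτ'⟩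
          rcases Finset.mem_erase.mp hτ' with ⟨hne1, hmem⟩
          refine Finset.mem_erase.mpr ⟨?_, Finset.mem_erase.mpr ⟨?_, hstab τ hmem⟩⟩
          · intro h
            exact hne1 (by rw [← conjAH_conjAH τ, h, conjAH_conjAH])
          · intro h
            exact hne2 (by rw [← conjAH_conjAH τ, h]))
        rw [← Finset.mul_prod_erase s _ hσ, ← Finset.mul_prod_erase _ _ hcm, ← mul_assoc]
        have hz : σ x * conjAH σ x = (Complex.normSq (σ x) : ℂ) := by
          rw [conjAH_apply]
          exact Complex.mul_conj (σ x)
        rw [hz]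
        have hn : 0 < Complex.normSq (σ x) := Complex.normSq_pos.mpr (hσx σ)
        constructor
        · rw [Complex.mul_re]
          simpa using mul_pos hn hrec.1
        · rw [Complex.mul_im]
          simp [hrec.2]
  have h0 := key Finset.univ (fun σ _ => Finset.mem_univ _)
  have heq : algebraMap ℚ ℂ (Algebra.norm ℚ x) = ∏ σ : K →ₐ[ℚ] ℂ, σ x :=
    Algebra.norm_eq_prod_embeddings ℚ ℂ x
  rw [← heq] at h0
  have h1 : (algebraMap ℚ ℂ (Algebra.norm ℚ x)).re = ((Algebra.norm ℚ x : ℚ) : ℝ) := by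
    rw [eq_ratCast (algebraMap ℚ ℂ)]
    exact Complex.ratCast_re _
  rw [h1] at h0
  exact_mod_cast h0.1

end NormPos

end HeckeAux
open HeckeAux in
/-- For every `g = (x, y) ∈ P_K⁺`, the number `L(g)` of left cosets and the
number `R(g)` of right cosets of `Γ = P_𝒪⁺` contained in the double coset `ΓgΓ` are finite and
satisfy `L(g) = N_{K/ℚ}(x) · R(g)` as rational numbers; equivalently, the modular function
`Δ(g) = R(g)/L(g)` equals `N_{K/ℚ}(x)⁻¹`. -/
theorem card_leftCosets_eq_norm_mul_card_rightCosets (K : Type*) [Field K] [NumberField K]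
    (g : AffPair K) (hg : TotallyPositive K (g.a : K)) :
    (leftCosetsIn K g).Finite ∧ (rightCosetsIn K g).Finite ∧
      (Nat.card ↥(leftCosetsIn K g) : ℚ) =
        Algebra.norm ℚ ((g.a : K)) * (Nat.card ↥(rightCosetsIn K g) : ℚ) := by
  classical
  have hx : ((g.a : K)) ≠ 0 := Units.ne_zero g.a
  obtain ⟨νx, hνx0, hνxpos, hνxint, hνxmul⟩ := exists_denom (K := K) ((g.a : K))
  obtain ⟨νi, hνi0, _, hνiint, hνimul⟩ := exists_denom (K := K) ((g.a : K))⁻¹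
  obtain ⟨νy, hνy0, _, hνyint, hνymul⟩ := exists_denom (K := K) g.b
  -- the three subgroups
  set A : AddSubgroup K := sm ((g.a : K)) (O K) with hA
  set B : AddSubgroup K := O K with hB
  set Mm : AddSubgroup K := Mx ((g.a : K)) with hMm
  have hAM : A ≤ Mm := smx_le_Mx _
  have hBM : B ≤ Mm := O_le_Mx _
  -- integral elements
  have hc_int : IsIntegral ℤ (νx * (g.a : K)) := hνxmul
  have hc0 : νx * (g.a : K) ≠ 0 := mul_ne_zero hνx0 hx
  have hcpos : TotallyPositive K (νx * (g.a : K)) := fun φ => by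
    rw [map_mul]; exact mul_pos (hνxpos φ) (hg φ)
  set ν₀ : NumberField.RingOfIntegers K := ⟨νx, hνxint⟩ with hν₀
  set c₀ : NumberField.RingOfIntegers K := ⟨νx * (g.a : K), hc_int⟩ with hc₀
  set C : AddSubgroup K := sm (νx * (g.a : K)) (O K) with hC
  have hCA : C ≤ A := by
    intro a ha
    obtain ⟨b, hb, hba⟩ := mem_sm.mp ha
    exact mem_sm.mpr ⟨νx * b, O_smul_mem hνxint hb, by rw [← hba]; ring⟩
  have hCB : C ≤ B := by
    intro a ha
    obtain ⟨b, hb, hba⟩ := mem_sm.mp ha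
    rw [← hba]
    exact O_smul_mem hc_int hb
  -- relindex chain
  have r1 : C.relIndex A * A.relIndex Mm = C.relIndex Mm :=
    AddSubgroup.relIndex_mul_relIndex C A Mm hCA hAM
  have r2 : C.relIndex B * B.relIndex Mm = C.relIndex Mm :=
    AddSubgroup.relIndex_mul_relIndex C B Mm hCB hBM
  have q1 : C.relIndex A = Ideal.absNorm (Ideal.span {ν₀}) := by
    have hCeq : C = sm ((g.a : K)) (sm νx (O K)) := by
      rw [hC, sm_sm, mul_comm]
    rw [hCeq, hA, relindex_sm _ hx]
    exact relindex_sm_O ν₀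
  have q2 : C.relIndex B = Ideal.absNorm (Ideal.span {c₀}) := by
    rw [hC, hB]
    exact relindex_sm_O c₀
  -- norms
  have hNν : (0 : ℚ) < Algebra.norm ℚ νx := norm_pos hνx0 hνxpos
  have hNx : (0 : ℚ) < Algebra.norm ℚ ((g.a : K)) := norm_pos hx hg
  have hq1' : ((Ideal.absNorm (Ideal.span {ν₀})) : ℚ) = Algebra.norm ℚ νx := by
    rw [Ideal.absNorm_span_singleton, Nat.cast_natAbs, Int.cast_abs, Algebra.coe_norm_int]
    exact abs_of_pos hNν
  have hq2' : ((Ideal.absNorm (Ideal.span {c₀})) : ℚ)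
      = Algebra.norm ℚ νx * Algebra.norm ℚ ((g.a : K)) := by
    rw [Ideal.absNorm_span_singleton, Nat.cast_natAbs, Int.cast_abs, Algebra.coe_norm_int]
    have h3 : ((c₀ : K)) = νx * (g.a : K) := rfl
    rw [h3, map_mul]
    exact abs_of_pos (by rw [← map_mul]; exact norm_pos hc0 hcpos)
  rw [q1] at r1
  rw [q2] at r2
  have hnat := r1.trans r2.symm
  have hQ : (Algebra.norm ℚ νx) * (A.relIndex Mm : ℚ)
      = (Algebra.norm ℚ νx * Algebra.norm ℚ ((g.a : K))) * (B.relIndex Mm : ℚ) := by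
    have h := congrArg (fun n : ℕ => (n : ℚ)) hnat
    push_cast at h
    rwa [hq1', hq2'] at h
  have keyEq : ((A.relIndex Mm : ℚ)) = Algebra.norm ℚ ((g.a : K)) * (B.relIndex Mm : ℚ) := by
    apply mul_left_cancel₀ (ne_of_gt hNν)
    rw [hQ]; ring
  -- finiteness of quotients
  have hν₀ne : (⟨νi, hνiint⟩ : NumberField.RingOfIntegers K) ≠ 0 := by
    intro h
    apply hνi0
    have h2 := congrArg (algebraMap (NumberField.RingOfIntegers K) K) h
    exact h2.trans (map_zero _)
  have hνxne : ν₀ ≠ 0 := by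
    intro h
    apply hνx0
    have h2 := congrArg (algebraMap (NumberField.RingOfIntegers K) K) h
    rw [map_zero] at h2
    exact h2
  have hνyne : (⟨νy, hνyint⟩ : NumberField.RingOfIntegers K) ≠ 0 := by
    intro h
    apply hνy0
    have h2 := congrArg (algebraMap (NumberField.RingOfIntegers K) K) h
    exact h2.trans (map_zero _)
  set f : NumberField.RingOfIntegers K × NumberField.RingOfIntegers K → K :=
    fun p => algebraMap (NumberField.RingOfIntegers K) K p.1 +
      (g.a : K) * algebraMap (NumberField.RingOfIntegers K) K p.2 with hf
  have hfmem : ∀ p, f p ∈ Mm := fun p => mem_Mx.mpr ⟨_, p.1.2, _, p.2.2, rfl⟩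
  have hfsurj : ∀ m ∈ Mm, ∃ p, f p = m := by
    intro m hm
    obtain ⟨p, hp, q, hq, rfl⟩ := mem_Mx.mp hm
    exact ⟨(⟨p, hp⟩, ⟨q, hq⟩), rfl⟩
  have instA : Finite (↥Mm ⧸ A.addSubgroupOf Mm) := by
    refine finite_quot_aux A Mm f hfmem hfsurj ⟨νi, hνiint⟩ hν₀ne ?_
    rintro p q ⟨d1, hd1⟩ ⟨d2, hd2⟩
    have e1 : algebraMap (NumberField.RingOfIntegers K) K p.1 -
        algebraMap (NumberField.RingOfIntegers K) K q.1 =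
        νi * algebraMap (NumberField.RingOfIntegers K) K d1 := by
      rw [← map_sub, hd1]; exact map_mul _ _ _
    have e2 : algebraMap (NumberField.RingOfIntegers K) K p.2 -
        algebraMap (NumberField.RingOfIntegers K) K q.2 =
        νi * algebraMap (NumberField.RingOfIntegers K) K d2 := by
      rw [← map_sub, hd2]; exact map_mul _ _ _
    refine mem_sm.mpr ⟨(νi * ((g.a : K))⁻¹) * algebraMap (NumberField.RingOfIntegers K) K d1 +
      νi * algebraMap (NumberField.RingOfIntegers K) K d2,
      add_mem (mem_O.mpr (hνimul.mul d1.2)) (mem_O.mpr (hνiint.mul d2.2)), ?_⟩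
    have hx1 : (g.a : K) * ((νi * ((g.a : K))⁻¹) *
        algebraMap (NumberField.RingOfIntegers K) K d1) =
        νi * algebraMap (NumberField.RingOfIntegers K) K d1 := by
      field_simp
    show (g.a : K) * _ = f p - f q
    rw [hf]
    linear_combination hx1 - e1 - (g.a : K) * e2
  have instB : Finite (↥Mm ⧸ B.addSubgroupOf Mm) := by
    refine finite_quot_aux B Mm f hfmem hfsurj ν₀ hνxne ?_
    rintro p q ⟨d1, hd1⟩ ⟨d2, hd2⟩
    have e1 : algebraMap (NumberField.RingOfIntegers K) K p.1 -
        algebraMap (NumberField.RingOfIntegers K) K q.1 =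
        νx * algebraMap (NumberField.RingOfIntegers K) K d1 := by
      rw [← map_sub, hd1]; exact map_mul _ _ _
    have e2 : algebraMap (NumberField.RingOfIntegers K) K p.2 -
        algebraMap (NumberField.RingOfIntegers K) K q.2 =
        νx * algebraMap (NumberField.RingOfIntegers K) K d2 := by
      rw [← map_sub, hd2]; exact map_mul _ _ _
    have hfe : f p - f q = νx * algebraMap (NumberField.RingOfIntegers K) K d1 +
        (νx * (g.a : K)) * algebraMap (NumberField.RingOfIntegers K) K d2 := by
      rw [hf]
      linear_combination e1 + (g.a : K) * e2
    rw [hfe]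
    exact add_mem (mem_O.mpr (hνxint.mul d1.2)) (mem_O.mpr (hνxmul.mul d2.2))
  -- finiteness of T
  have finT : Finite ↥(Tset ((g.a : K)) g.b) := by
    set νy₀ : NumberField.RingOfIntegers K := (⟨νy, hνyint⟩ : NumberField.RingOfIntegers K)
      with hνy₀def
    have : Finite (NumberField.RingOfIntegers K ⧸ Ideal.span {νy₀}) :=
      finite_quot_ideal _ hνyne
    set I : Ideal (NumberField.RingOfIntegers K) := Ideal.span {νy₀} with hI
    set g' : (NumberField.RingOfIntegers K ⧸ I) → K ⧸ Mx ((g.a : K)) :=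
      fun w => QuotientAddGroup.mk ((algebraMap (NumberField.RingOfIntegers K) K w.out) * g.b)
      with hg'
    have hsub : Tset ((g.a : K)) g.b ⊆ Set.range g' := by
      rintro τ ⟨u, hu, rfl⟩
      obtain ⟨u₀, hu₀⟩ : ∃ v : NumberField.RingOfIntegers K,
          algebraMap (NumberField.RingOfIntegers K) K v = u :=
        ⟨⟨u, Uset.isIntegral hu⟩, rfl⟩
      refine ⟨Submodule.Quotient.mk u₀, ?_⟩
      rw [hg']
      apply mk_eq_iff.mpr
      have hdvd : νy₀ ∣
          ((Submodule.Quotient.mk u₀ : NumberField.RingOfIntegers K ⧸ I).out - u₀) := by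
        apply Ideal.mem_span_singleton.mp
        rw [← Submodule.Quotient.eq]
        exact Quotient.out_eq _
      obtain ⟨d, hd⟩ := hdvd
      have e3 : algebraMap (NumberField.RingOfIntegers K) K
          ((Submodule.Quotient.mk u₀ : NumberField.RingOfIntegers K ⧸ I).out) - u =
          νy * algebraMap (NumberField.RingOfIntegers K) K d := by
        have h5 := congrArg (algebraMap (NumberField.RingOfIntegers K) K) hd
        rw [map_sub, map_mul, hu₀] at h5
        have h6 : algebraMap (NumberField.RingOfIntegers K) K νy₀ = νy := rfl
        rw [h6] at h5
        exact h5
      apply O_le_Mx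
      have e4 : algebraMap (NumberField.RingOfIntegers K) K
          ((Submodule.Quotient.mk u₀ : NumberField.RingOfIntegers K ⧸ I).out) * g.b -
          u * g.b = (νy * g.b) * algebraMap (NumberField.RingOfIntegers K) K d := by
        linear_combination g.b * e3
      rw [e4]
      exact mem_O.mpr (hνymul.mul d.2)
    exact (Set.Finite.subset (Set.finite_range g') hsub).to_subtype
  -- the equivalences
  have eL : ↥(leftCosetsIn K g) ≃ ↥(Tset ((g.a : K)) g.b) ×
      ↥(QuotientAddGroup.mk '' ((Mx ((g.a : K)) : AddSubgroup K) : Set K) : Set (K ⧸ A)) :=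
    (Equiv.setCongr (leftCosetsIn_eq g)).trans
      ((imageEquivOfKer (LC ((g.a : K))) (QuotientAddGroup.mk : K → K ⧸ A)
          (Sset ((g.a : K)) g.b)
          (fun a _ b _ => (LC_eq_iff g hx).trans mk_eq_iff.symm)).trans
        (equivProd ((g.a : K)) g.b A hAM))
  have eR : ↥(rightCosetsIn K g) ≃ ↥(Tset ((g.a : K)) g.b) ×
      ↥(QuotientAddGroup.mk '' ((Mx ((g.a : K)) : AddSubgroup K) : Set K) : Set (K ⧸ B)) :=
    (Equiv.setCongr (rightCosetsIn_eq g)).trans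
      ((imageEquivOfKer (RC ((g.a : K))) (QuotientAddGroup.mk : K → K ⧸ B)
          (Sset ((g.a : K)) g.b)
          (fun a _ b _ => (RC_eq_iff g hx).trans mk_eq_iff.symm)).trans
        (equivProd ((g.a : K)) g.b B hBM))
  have finMA : Finite ↥(QuotientAddGroup.mk '' ((Mx ((g.a : K)) : AddSubgroup K) : Set K) :
      Set (K ⧸ A)) := Finite.of_equiv _ (imageQuotEquiv A Mm).symm
  have finMB : Finite ↥(QuotientAddGroup.mk '' ((Mx ((g.a : K)) : AddSubgroup K) : Set K) :
      Set (K ⧸ B)) := Finite.of_equiv _ (imageQuotEquiv B Mm).symm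
  have finL : Finite ↥(leftCosetsIn K g) := Finite.of_equiv _ eL.symm
  have finR : Finite ↥(rightCosetsIn K g) := Finite.of_equiv _ eR.symm
  refine ⟨Set.toFinite _, Set.toFinite _, ?_⟩
  -- the card computation
  have cardL : Nat.card ↥(leftCosetsIn K g)
      = Nat.card ↥(Tset ((g.a : K)) g.b) * A.relIndex Mm := by
    rw [Nat.card_congr eL, Nat.card_prod, Nat.card_congr (imageQuotEquiv A Mm)]
    rfl
  have cardR : Nat.card ↥(rightCosetsIn K g)
      = Nat.card ↥(Tset ((g.a : K)) g.b) * B.relIndex Mm := by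
    rw [Nat.card_congr eR, Nat.card_prod, Nat.card_congr (imageQuotEquiv B Mm)]
    rfl
  rw [cardL, cardR]
  push_cast
  rw [keyEq]
  ring
end

section
/- One has S₀ ⊆ S ∩ S⁻¹ ⊆ ker N, and N(γ) ≥ 1 for every γ ∈ S. Moreover, if for some β ∈ ℝ the family (N(s)^{-β})_{s ∈ S} is summable, then the set S ∩ ker N = {s ∈ S : N(s) = 1} is finite. -/
open Pointwise

/-- The boundary set `Y₀ = Y \ ⋃_{γ : N(γ) > 1} γ·Y` of the cocycle determined by `N`. -/
def boundarySet {Γ X : Type*} [Group Γ] [MulAction Γ X] (N : Γ →* ℝ) (Y : Set X) : Set X :=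
  Y \ ⋃ (γ : Γ) (_ : 1 < N γ), γ • Y

/-- The set `S = {γ ∈ Γ : γ·Y₀ ∩ Y ≠ ∅}`. -/
def Sset {Γ X : Type*} [Group Γ] [MulAction Γ X] (N : Γ →* ℝ) (Y : Set X) : Set Γ :=
  {γ : Γ | ((γ • boundarySet N Y) ∩ Y).Nonempty}

/-- The set `S₀ = {γ ∈ Γ : γ·Y₀ ∩ Y₀ ≠ ∅}`. -/
def S0set {Γ X : Type*} [Group Γ] [MulAction Γ X] (N : Γ →* ℝ) (Y : Set X) : Set Γ :=
  {γ : Γ | ((γ • boundarySet N Y) ∩ boundarySet N Y).Nonempty}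

/-- One has `S₀ ⊆ S ∩ S⁻¹ ⊆ ker N` and `N(γ) ≥ 1` for every `γ ∈ S`;
moreover, if for some `β ∈ ℝ` the family `(N(s)^{-β})_{s ∈ S}` is summable, then the set
`S ∩ ker N = {s ∈ S : N(s) = 1}` is finite. -/
theorem S0_subset_and_finite_ker_inter {Γ X : Type*} [Group Γ] [MulAction Γ X]
    (N : Γ →* ℝ) (hN : ∀ γ, 0 < N γ) (Y : Set X) :
    S0set N Y ⊆ Sset N Y ∩ (Sset N Y)⁻¹ ∧
      Sset N Y ∩ (Sset N Y)⁻¹ ⊆ {γ : Γ | N γ = 1} ∧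
      (∀ γ ∈ Sset N Y, 1 ≤ N γ) ∧
      (∀ β : ℝ, Summable (fun s : Sset N Y => N s.1 ^ (-β)) →
        {s : Γ | s ∈ Sset N Y ∧ N s = 1}.Finite) := by
  have hge : ∀ γ ∈ Sset N Y, 1 ≤ N γ := by
    intro γ hγ
    by_contra hlt
    push_neg at hlt
    obtain ⟨x, hx, hxY⟩ := hγ
    obtain ⟨y, hy, rfl⟩ := hx
    -- y ∈ Y₀, γ • y ∈ Y, N γ < 1 so N γ⁻¹ > 1 and y ∈ γ⁻¹ • Y
    have hinv : 1 < N γ⁻¹ := by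
      rw [map_inv]
      exact (one_lt_inv₀ (hN γ)).mpr hlt
    exact hy.2 (Set.mem_iUnion.mpr ⟨γ⁻¹, Set.mem_iUnion.mpr ⟨hinv, ⟨γ • y, hxY, by simp⟩⟩⟩)
  have hSS : Sset N Y ∩ (Sset N Y)⁻¹ ⊆ {γ : Γ | N γ = 1} := by
    intro γ ⟨h1, h2⟩
    have h1' := hge γ h1
    have h2' := hge γ⁻¹ h2
    rw [map_inv] at h2'
    have : N γ ≤ 1 := by
      have := (one_le_inv₀ (hN γ)).mp h2'
      linarith
    exact le_antisymm this h1'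
  have hS0 : S0set N Y ⊆ Sset N Y ∩ (Sset N Y)⁻¹ := by
    intro γ hγ
    obtain ⟨x, hx, hx0⟩ := hγ
    obtain ⟨y, hy, rfl⟩ := hx
    constructor
    · exact ⟨γ • y, ⟨y, hy, rfl⟩, hx0.1⟩
    · refine ⟨y, ⟨γ • y, hx0, ?_⟩, hy.1⟩
      simp
  refine ⟨hS0, hSS, hge, ?_⟩
  intro β hsum
  have h0 := hsum.tendsto_cofinite_zero
  have hfin : {s : Sset N Y | (N s.1 ^ (-β) : ℝ) ∉ Metric.ball 0 (1/2)}.Finite := by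
    have := h0.eventually (Metric.ball_mem_nhds (0:ℝ) (by norm_num : (0:ℝ) < 1/2))
    simpa [Filter.eventually_cofinite] using this
  have hsub : {s : Sset N Y | N s.1 = 1} ⊆
      {s : Sset N Y | (N s.1 ^ (-β) : ℝ) ∉ Metric.ball 0 (1/2)} := by
    intro s hs
    simp only [Set.mem_setOf_eq] at hs ⊢
    rw [hs, Real.one_rpow]
    simp [Metric.mem_ball]
    norm_num
  have h1 : {s : Sset N Y | N s.1 = 1}.Finite := hfin.subset hsub
  have : {s : Γ | s ∈ Sset N Y ∧ N s = 1} = Subtype.val '' {s : Sset N Y | N s.1 = 1} := by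
    ext s
    simp only [Set.mem_setOf_eq, Set.mem_image]
    constructor
    · rintro ⟨h1, h2⟩; exact ⟨⟨s, h1⟩, h2, rfl⟩
    · rintro ⟨⟨t, ht⟩, h2, rfl⟩; exact ⟨ht, h2⟩
  rw [this]
  exact h1.image _
end

section
/- Assume the standing hypotheses (i) and (ii), let β be a nonzero real number, and suppose the family (N(s)^{-β})_{s ∈ S} is summable with sum Z. Then every β-scaling Borel probability measure μ on X satisfies μ(Yₙ) = 0 for every n ≥ 1 and μ(Y₀) ≥ 1/Z; in particular μ(Y₀) > 0. -/
open Pointwise MeasureTheory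

/-- A Borel probability measure `μ` on `X` is `β`-scaling if it is concentrated on `Y` and
`μ(γ·A) = N(γ)^{-β}·μ(A)` for every `γ ∈ Γ` and every Borel set `A ⊆ Y` with `γ·A ⊆ Y`. -/
def IsScaling {Γ X : Type*} [Group Γ] [MulAction Γ X] [MeasurableSpace X]
    (N : Γ →* ℝ) (Y : Set X) (β : ℝ) (μ : Measure X) : Prop :=
  μ Yᶜ = 0 ∧ ∀ (γ : Γ) (A : Set X), MeasurableSet A → A ⊆ Y → γ • A ⊆ Y →
    μ (γ • A) = ENNReal.ofReal (N γ ^ (-β)) * μ A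

set_option maxHeartbeats 1000000 in
/-- Under the standing hypotheses (i) and (ii), for a nonzero `β ∈ ℝ` such
that `(N(s)^{-β})_{s ∈ S}` is summable with sum `Z`, every `β`-scaling Borel probability
measure `μ` on `X` satisfies `μ(Yₙ) = 0` for all `n` and `μ(Y₀) ≥ 1/Z`; in particular
`μ(Y₀) > 0`. -/
theorem scaling_measure_vanishes_on_Yn_and_positive_on_boundary
    {Γ X : Type*} [Group Γ] [Countable Γ]
    [TopologicalSpace X] [LocallyCompactSpace X] [SecondCountableTopology X] [T2Space X]
    [MeasurableSpace X] [BorelSpace X] [MulAction Γ X] [ContinuousConstSMul Γ X]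
    (N : Γ →* ℝ) (hN : ∀ γ, 0 < N γ)
    (Y : Set X) (hY : IsClopen Y) (hYcov : (⋃ γ : Γ, γ • Y) = Set.univ)
    (Yn : ℕ → Set X) (γn : ℕ → Γ)
    (hYnMeas : ∀ n, MeasurableSet (Yn n)) (hYnSub : ∀ n, Yn n ⊆ Y)
    (hi : ∀ U : Set X, IsOpen U → boundarySet N Y ⊆ U →
      Y \ (⋃ s ∈ Sset N Y, s • U) ⊆ ⋃ n, Yn n)
    (hii : ∀ n, N (γn n) ≠ 1 ∧ γn n • Yn n = Yn n)
    (β : ℝ) (hβ : β ≠ 0) (Z : ℝ)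
    (hsum : HasSum (fun s : Sset N Y => N s.1 ^ (-β)) Z)
    (μ : Measure X) [IsProbabilityMeasure μ] (hμ : IsScaling N Y β μ) :
    (∀ n, μ (Yn n) = 0) ∧ ENNReal.ofReal Z⁻¹ ≤ μ (boundarySet N Y) ∧
      0 < μ (boundarySet N Y) := by
  obtain ⟨hμYc, hscal⟩ := hμ
  have hYopen : IsOpen Y := hY.isOpen
  have hYmeas : MeasurableSet Y := hYopen.measurableSet
  have hofReal_ne_one : ∀ γ : Γ, N γ ≠ 1 → ENNReal.ofReal (N γ ^ (-β)) ≠ 1 := by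
    intro γ hγ h
    rw [ENNReal.ofReal_eq_one] at h
    have hlog : Real.log (N γ ^ (-β)) = -β * Real.log (N γ) := Real.log_rpow (hN γ) _
    rw [h, Real.log_one] at hlog
    have hβ' : -β ≠ 0 := neg_ne_zero.mpr hβ
    have : Real.log (N γ) = 0 := by
      rcases mul_eq_zero.mp hlog.symm with h' | h'
      · exact absurd h' hβ'
      · exact h'
    rcases Real.log_eq_zero.mp this with h' | h' | h'
    · exact absurd h' (hN γ).ne'
    · exact hγ h'
    · linarith [hN γ]
  -- Part 1 : μ (Yn n) = 0
  have h1 : ∀ n, μ (Yn n) = 0 := by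
    intro n
    obtain ⟨hNn, hfix⟩ := hii n
    have heq := hscal (γn n) (Yn n) (hYnMeas n) (hYnSub n) (by rw [hfix]; exact hYnSub n)
    rw [hfix] at heq
    by_contra h0
    have hfin : μ (Yn n) ≠ ⊤ := (measure_lt_top μ _).ne
    have : (1 : ENNReal) = ENNReal.ofReal (N (γn n) ^ (-β)) := by
      calc (1 : ENNReal) = μ (Yn n) * (μ (Yn n))⁻¹ := (ENNReal.mul_inv_cancel h0 hfin).symm
        _ = ENNReal.ofReal (N (γn n) ^ (-β)) * μ (Yn n) * (μ (Yn n))⁻¹ := by rw [← heq]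
        _ = ENNReal.ofReal (N (γn n) ^ (-β)) * (μ (Yn n) * (μ (Yn n))⁻¹) := mul_assoc _ _ _
        _ = ENNReal.ofReal (N (γn n) ^ (-β)) := by
            rw [ENNReal.mul_inv_cancel h0 hfin, mul_one]
    exact hofReal_ne_one (γn n) hNn this.symm
  have hμY1 : μ Y = 1 := by
    have h := measure_add_measure_compl (μ := μ) hYmeas
    rw [hμYc, add_zero, measure_univ] at h
    exact h
  -- sum of the weights in ENNReal
  have hwpos : ∀ s : Γ, (0 : ℝ) ≤ N s ^ (-β) := fun s => (Real.rpow_pos_of_pos (hN s) _).le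
  have hsumZ : (∑' s : Sset N Y, ENNReal.ofReal (N s.1 ^ (-β))) = ENNReal.ofReal Z := by
    have h := ENNReal.ofReal_tsum_of_nonneg (f := fun s : Sset N Y => N s.1 ^ (-β))
      (fun s => hwpos s.1) hsum.summable
    rw [hsum.tsum_eq] at h
    exact h.symm
  -- the key covering estimate
  have key : ∀ U : Set X, IsOpen U → boundarySet N Y ⊆ U →
      (1 : ENNReal) ≤ ENNReal.ofReal Z * μ (U ∩ Y) := by
    intro U hU hsub
    set V := U ∩ Y with hV
    have hVopen : IsOpen V := hU.inter hYopen
    have hVsubY : V ⊆ Y := Set.inter_subset_right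
    have hVsub : boundarySet N Y ⊆ V :=
      Set.subset_inter hsub (fun x hx => hx.1)
    have hcov := hi V hVopen hVsub
    have hYsub : Y ⊆ (⋃ s ∈ Sset N Y, s • V) ∪ ⋃ n, Yn n := by
      intro x hx
      by_cases hx' : x ∈ ⋃ s ∈ Sset N Y, s • V
      · exact Or.inl hx'
      · exact Or.inr (hcov ⟨hx, hx'⟩)
    have hb : ∀ s : Γ, μ (s • V) ≤ ENNReal.ofReal (N s ^ (-β)) * μ V := by
      intro s
      set A : Set X := V ∩ (fun x => s • x) ⁻¹' Y with hA
      have hAmeas : MeasurableSet A :=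
        hVopen.measurableSet.inter ((continuous_const_smul s).measurable hYmeas)
      have hAV : A ⊆ V := Set.inter_subset_left
      have hsA : s • A = s • V ∩ Y := by
        ext y
        simp only [Set.mem_smul_set_iff_inv_smul_mem, hA, Set.mem_inter_iff,
          Set.mem_preimage, smul_inv_smul]
      have hsAY : s • A ⊆ Y := by rw [hsA]; exact Set.inter_subset_right
      have heq := hscal s A hAmeas (hAV.trans hVsubY) hsAY
      have hdiff : μ (s • V \ Y) = 0 :=
        measure_mono_null (fun x hx => hx.2) hμYc
      calc μ (s • V) ≤ μ (s • V ∩ Y) + μ (s • V \ Y) := by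
            rw [measure_inter_add_diff _ hYmeas]
        _ = μ (s • A) := by rw [hdiff, add_zero, hsA]
        _ = ENNReal.ofReal (N s ^ (-β)) * μ A := heq
        _ ≤ ENNReal.ofReal (N s ^ (-β)) * μ V :=
            mul_le_mul_right (measure_mono hAV) _
    calc (1 : ENNReal) = μ Y := hμY1.symm
      _ ≤ μ ((⋃ s ∈ Sset N Y, s • V) ∪ ⋃ n, Yn n) := measure_mono hYsub
      _ ≤ μ (⋃ s ∈ Sset N Y, s • V) + μ (⋃ n, Yn n) := measure_union_le _ _
      _ ≤ (∑' s : Sset N Y, μ (s.1 • V)) + μ (⋃ n, Yn n) := by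
          gcongr
          exact measure_biUnion_le μ (Set.to_countable _) _
      _ ≤ (∑' s : Sset N Y, μ (s.1 • V)) + ∑' n, μ (Yn n) := by
          gcongr
          exact measure_iUnion_le _
      _ = ∑' s : Sset N Y, μ (s.1 • V) := by simp [h1]
      _ ≤ ∑' s : Sset N Y, ENNReal.ofReal (N s.1 ^ (-β)) * μ V :=
          ENNReal.tsum_le_tsum fun s => hb s.1
      _ = (∑' s : Sset N Y, ENNReal.ofReal (N s.1 ^ (-β))) * μ V :=
          ENNReal.tsum_mul_right
      _ = ENNReal.ofReal Z * μ (U ∩ Y) := by rw [hsumZ]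
  -- Z is positive
  have hZpos : 0 < Z := by
    by_contra h
    push_neg at h
    have hk := key Y hYopen (fun x hx => hx.1)
    rw [ENNReal.ofReal_eq_zero.mpr h, zero_mul] at hk
    exact (not_le.mpr zero_lt_one) hk
  have hZne : ENNReal.ofReal Z ≠ 0 := by
    simp [ENNReal.ofReal_eq_zero, not_le, hZpos]
  have hZnetop : ENNReal.ofReal Z ≠ ⊤ := ENNReal.ofReal_ne_top
  -- μ(Y₀) ≥ 1/Z  via outer regularity
  have h2 : ENNReal.ofReal Z⁻¹ ≤ μ (boundarySet N Y) := by
    rw [Set.measure_eq_iInf_isOpen]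
    refine le_iInf fun U => le_iInf fun hsub => le_iInf fun hUopen => ?_
    have hk := key U hUopen hsub
    have hk2 : (1 : ENNReal) ≤ ENNReal.ofReal Z * μ U :=
      hk.trans (mul_le_mul_right (measure_mono Set.inter_subset_left) _)
    rw [ENNReal.ofReal_inv_of_pos hZpos]
    calc (ENNReal.ofReal Z)⁻¹ = (ENNReal.ofReal Z)⁻¹ * 1 := (mul_one _).symm
      _ ≤ (ENNReal.ofReal Z)⁻¹ * (ENNReal.ofReal Z * μ U) := mul_le_mul_right hk2 _
      _ = ((ENNReal.ofReal Z)⁻¹ * ENNReal.ofReal Z) * μ U := (mul_assoc _ _ _).symm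
      _ = μ U := by rw [ENNReal.inv_mul_cancel hZne hZnetop, one_mul]
  refine ⟨h1, h2, lt_of_lt_of_le ?_ h2⟩
  exact ENNReal.ofReal_pos.mpr (inv_pos.mpr hZpos)
end

section
/- Assume the standing hypotheses (i) and (ii), let β be a nonzero real number, and suppose the family (N(s)^{-β})_{s ∈ S} is summable. Then every β-scaling Borel probability measure μ on X is concentrated on the orbit of Y₀: μ(Y ∖ Γ·Y₀) = 0, where Γ·Y₀ = ⋃_{γ ∈ Γ} γ·Y₀. -/
open Pointwise MeasureTheory

set_option maxHeartbeats 1000000 in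
/-- Under the standing hypotheses (i) and (ii), for a nonzero `β ∈ ℝ` such
that `(N(s)^{-β})_{s ∈ S}` is summable, every `β`-scaling Borel probability measure `μ` on `X`
is concentrated on the orbit of the boundary set: `μ(Y \ Γ·Y₀) = 0`. -/
theorem scaling_measure_concentrated_on_orbit_of_boundary
    {Γ X : Type*} [Group Γ] [Countable Γ]
    [TopologicalSpace X] [LocallyCompactSpace X] [SecondCountableTopology X] [T2Space X]
    [MeasurableSpace X] [BorelSpace X] [MulAction Γ X] [ContinuousConstSMul Γ X]
    (N : Γ →* ℝ) (hN : ∀ γ, 0 < N γ)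
    (Y : Set X) (hY : IsClopen Y) (hYcov : (⋃ γ : Γ, γ • Y) = Set.univ)
    (Yn : ℕ → Set X) (γn : ℕ → Γ)
    (hYnMeas : ∀ n, MeasurableSet (Yn n)) (hYnSub : ∀ n, Yn n ⊆ Y)
    (hi : ∀ U : Set X, IsOpen U → boundarySet N Y ⊆ U →
      Y \ (⋃ s ∈ Sset N Y, s • U) ⊆ ⋃ n, Yn n)
    (hii : ∀ n, N (γn n) ≠ 1 ∧ γn n • Yn n = Yn n)
    (β : ℝ) (hβ : β ≠ 0)
    (hsum : Summable (fun s : Sset N Y => N s.1 ^ (-β)))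
    (μ : Measure X) [IsProbabilityMeasure μ] (hμ : IsScaling N Y β μ) :
    μ (Y \ ⋃ γ : Γ, γ • boundarySet N Y) = 0 := by
  classical
  obtain ⟨hμc, hμs⟩ := hμ
  set Y₀ : Set X := boundarySet N Y with hY₀def
  -- Y₀ is closed
  have hY₀closed : IsClosed Y₀ := by
    have hopen : IsOpen (⋃ (γ : Γ) (_ : 1 < N γ), γ • Y) :=
      isOpen_iUnion fun γ => isOpen_iUnion fun _ => hY.2.smul γ
    exact hY.1.sdiff hopen
  -- smul of measurable sets is measurable
  have hmeas_smul : ∀ (s : Γ) (A : Set X), MeasurableSet A → MeasurableSet (s • A) := by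
    intro s A hA
    have h : s • A = (fun x : X => s⁻¹ • x) ⁻¹' A := by
      ext x; simp [Set.mem_smul_set_iff_inv_smul_mem]
    rw [h]
    exact (continuous_const_smul (s⁻¹)).measurable hA
  set W : Set X := ⋃ γ : Γ, γ • Y₀ with hWdef
  have hWmeas : MeasurableSet W :=
    MeasurableSet.iUnion fun γ => (hY₀closed.smul γ).measurableSet
  set Z : Set X := Wᶜ with hZdef
  have hZmeas : MeasurableSet Z := hWmeas.compl
  -- Z is Γ-invariant
  have hZinv : ∀ s : Γ, s • Z = Z := by
    intro s
    have hW : s • W = W := by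
      rw [hWdef, Set.smul_set_iUnion]
      have h1 : (⋃ γ : Γ, s • γ • Y₀) = ⋃ γ : Γ, (s * γ) • Y₀ := by
        simp [smul_smul]
      rw [h1]
      exact Function.Surjective.iUnion_comp (fun γ => ⟨s⁻¹ * γ, by group⟩)
        (fun γ => γ • Y₀)
    rw [hZdef, Set.smul_set_compl, hW]
  set ν : Measure X := μ.restrict Z with hνdef
  have hνfin : IsFiniteMeasure ν := inferInstance
  -- ν applied to measurable sets
  have hνapp : ∀ A : Set X, MeasurableSet A → ν A = μ (A ∩ Z) :=
    fun A hA => Measure.restrict_apply hA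
  -- ν vanishes outside Y
  have hνYc : ν Yᶜ = 0 :=
    le_antisymm ((Measure.restrict_le_self Yᶜ).trans_eq hμc) zero_le
  -- ν is scaling
  have hνs : ∀ (s : Γ) (A : Set X), MeasurableSet A → A ⊆ Y → s • A ⊆ Y →
      ν (s • A) = ENNReal.ofReal (N s ^ (-β)) * ν A := by
    intro s A hA hAY hsAY
    rw [hνapp _ (hmeas_smul s A hA), hνapp _ hA]
    have h1 : s • A ∩ Z = s • (A ∩ Z) := by
      conv_lhs => rw [← hZinv s]
      rw [Set.smul_set_inter]
    rw [h1]
    exact hμs s (A ∩ Z) (hA.inter hZmeas) ((Set.inter_subset_left).trans hAY)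
      ((Set.smul_set_mono Set.inter_subset_left).trans hsAY)
  -- each Yn is μ-null
  have hYn0 : ∀ n, μ (Yn n) = 0 := by
    intro n
    obtain ⟨hN1, hfix⟩ := hii n
    have h := hμs (γn n) (Yn n) (hYnMeas n) (hYnSub n) (by rw [hfix]; exact hYnSub n)
    rw [hfix] at h
    set c := ENNReal.ofReal (N (γn n) ^ (-β)) with hcdef
    have hc1 : c ≠ 1 := by
      rw [hcdef, Ne, ENNReal.ofReal_eq_one]
      intro hone
      have hpos := hN (γn n)
      have hlog : Real.log (N (γn n) ^ (-β)) = 0 := by rw [hone, Real.log_one]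
      rw [Real.log_rpow hpos] at hlog
      rcases mul_eq_zero.mp hlog with h' | h'
      · exact hβ (neg_eq_zero.mp h')
      · rcases Real.log_eq_zero.mp h' with h'' | h'' | h''
        · exact absurd h'' (ne_of_gt hpos)
        · exact hN1 h''
        · linarith
    by_contra hne
    have hfin : μ (Yn n) ≠ ⊤ := measure_ne_top μ _
    apply hc1
    calc c = c * (μ (Yn n) * (μ (Yn n))⁻¹) := by
            rw [ENNReal.mul_inv_cancel hne hfin, mul_one]
      _ = (c * μ (Yn n)) * (μ (Yn n))⁻¹ := by ring
      _ = μ (Yn n) * (μ (Yn n))⁻¹ := by rw [← h]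
      _ = 1 := ENNReal.mul_inv_cancel hne hfin
  -- the constant C
  set C : ENNReal := ∑' s : Sset N Y, ENNReal.ofReal (N s.1 ^ (-β)) with hCdef
  have hCfin : C ≠ ⊤ := by
    have h : ENNReal.ofReal (∑' s : Sset N Y, N s.1 ^ (-β))
        = ∑' s : Sset N Y, ENNReal.ofReal (N s.1 ^ (-β)) :=
      ENNReal.ofReal_tsum_of_nonneg (fun s => Real.rpow_nonneg (hN s.1).le _) hsum
    rw [hCdef, ← h]
    exact ENNReal.ofReal_ne_top
  -- the key estimate: ν Y ≤ C * ν U for any open U ⊇ Y₀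
  have hkey : ∀ U : Set X, IsOpen U → Y₀ ⊆ U → ν Y ≤ C * ν U := by
    intro U hUopen hUY₀
    set U' : Set X := U ∩ Y with hU'def
    have hU'open : IsOpen U' := hUopen.inter hY.2
    have hU'Y₀ : Y₀ ⊆ U' := Set.subset_inter hUY₀ Set.diff_subset
    have hcover : Y ⊆ (⋃ s ∈ Sset N Y, s • U') ∪ ⋃ n, Yn n := by
      intro x hx
      by_cases hx' : x ∈ ⋃ s ∈ Sset N Y, s • U'
      · exact Or.inl hx'
      · exact Or.inr (hi U' hU'open hU'Y₀ ⟨hx, hx'⟩)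
    have hYn0' : ν (⋃ n, Yn n) = 0 := by
      refine le_antisymm ?_ zero_le
      calc ν (⋃ n, Yn n) ≤ μ (⋃ n, Yn n) := Measure.restrict_le_self _
        _ ≤ ∑' n, μ (Yn n) := measure_iUnion_le _
        _ = 0 := by simp [hYn0]
    have hbound : ∀ s : Γ, s ∈ Sset N Y → ν (s • U') ≤
        ENNReal.ofReal (N s ^ (-β)) * ν U' := by
      intro s _
      set A : Set X := U' ∩ s⁻¹ • Y with hAdef
      have hAmeas : MeasurableSet A := (hU'open.inter (hY.2.smul s⁻¹)).measurableSet
      have hAY : A ⊆ Y := Set.inter_subset_left.trans Set.inter_subset_right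
      have hsAY : s • A ⊆ Y := by
        intro x hx
        rw [hAdef, Set.smul_set_inter] at hx
        have := hx.2
        rwa [smul_inv_smul] at this
      have hsub : s • U' ⊆ s • A ∪ Yᶜ := by
        intro x hx
        by_cases hxY : x ∈ Y
        · left
          rw [hAdef, Set.smul_set_inter, smul_inv_smul]
          exact ⟨hx, hxY⟩
        · exact Or.inr hxY
      calc ν (s • U') ≤ ν (s • A) + ν Yᶜ := le_trans (measure_mono hsub)
            (measure_union_le _ _)
        _ = ν (s • A) := by rw [hνYc, add_zero]
        _ = ENNReal.ofReal (N s ^ (-β)) * ν A := hνs s A hAmeas hAY hsAY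
        _ ≤ ENNReal.ofReal (N s ^ (-β)) * ν U' :=
            mul_le_mul_right (measure_mono Set.inter_subset_left) _
    calc ν Y ≤ ν ((⋃ s ∈ Sset N Y, s • U') ∪ ⋃ n, Yn n) := measure_mono hcover
      _ ≤ ν (⋃ s ∈ Sset N Y, s • U') + ν (⋃ n, Yn n) := measure_union_le _ _
      _ = ν (⋃ s ∈ Sset N Y, s • U') := by rw [hYn0', add_zero]
      _ ≤ ∑' s : Sset N Y, ν (s.1 • U') :=
          measure_biUnion_le ν (Set.to_countable _) _
      _ ≤ ∑' s : Sset N Y, ENNReal.ofReal (N s.1 ^ (-β)) * ν U' :=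
          ENNReal.tsum_le_tsum (fun s => hbound s.1 s.2)
      _ = C * ν U' := by rw [hCdef, ENNReal.tsum_mul_right]
      _ ≤ C * ν U := mul_le_mul_right (measure_mono Set.inter_subset_left) _
  -- ν Y₀ = 0 since Y₀ ⊆ W
  have hνY₀ : ν Y₀ = 0 := by
    rw [hνapp _ hY₀closed.measurableSet]
    have : Y₀ ∩ Z = ∅ := by
      apply Set.eq_empty_of_subset_empty
      intro x hx
      exact hx.2 (Set.mem_iUnion.mpr ⟨1, by simpa using hx.1⟩)
    rw [this, measure_empty]
  -- conclude ν Y = 0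
  have hνY : ν Y = 0 := by
    by_contra hne
    have hνYfin : ν Y ≠ ⊤ := measure_ne_top ν _
    have hC1 : C + 1 ≠ 0 := by simp
    have hC1fin : C + 1 ≠ ⊤ := by
      simp [hCfin]
    set ε : ENNReal := ν Y / (C + 1) with hεdef
    have hεpos : 0 < ε := ENNReal.div_pos hne hC1fin
    obtain ⟨U, hUY₀, hUopen, hUlt⟩ := Set.exists_isOpen_lt_of_lt Y₀ ε
      (by rw [hνY₀]; exact hεpos)
    have h1 : ν Y ≤ C * ν U := hkey U hUopen hUY₀
    have h2 : C * ν U ≤ (C + 1) * ν U := mul_le_mul_left le_self_add _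
    have h3 : (C + 1) * ν U < (C + 1) * ε :=
      (ENNReal.mul_lt_mul_iff_right hC1 hC1fin).mpr hUlt
    have h4 : (C + 1) * ε = ν Y := by
      rw [hεdef, ENNReal.mul_div_cancel hC1 hC1fin]
    exact absurd (h1.trans_lt (h2.trans_lt h3)) (by rw [h4]; exact lt_irrefl _)
  -- translate back
  have hgoal : Y \ ⋃ γ : Γ, γ • boundarySet N Y = Y ∩ Z := by
    rw [hZdef, hWdef]; rfl
  rw [hgoal, ← hνapp Y hY.2.measurableSet]
  exact hνY
end

section
/- Assume the standing hypotheses (i) and (ii), let β be a nonzero real number, and suppose the family (N(s)^{-β})_{s ∈ S} is summable. If μ₁ and μ₂ are β-scaling Borel probability measures on X whose normalized restrictions to Y₀ agree, i.e. μ₁(A)/μ₁(Y₀) = μ₂(A)/μ₂(Y₀) for every Borel set A ⊆ Y₀, then μ₁ = μ₂. In other words, the map μ ↦ μ(Y₀)^{-1}·μ|_{Y₀} is injective on β-scaling Borel probability measures. -/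
open Pointwise MeasureTheory

private lemma aux_smul_measurableSet {Γ X : Type*} [Group Γ] [TopologicalSpace X]
    [MeasurableSpace X] [BorelSpace X] [MulAction Γ X] [ContinuousConstSMul Γ X] (γ : Γ)
    {A : Set X} (hA : MeasurableSet A) : MeasurableSet (γ • A) := by
  have h : γ • A = (fun x : X => γ⁻¹ • x) ⁻¹' A := by
    ext x
    simp [Set.mem_smul_set_iff_inv_smul_mem]
  rw [h]
  exact (continuous_const_smul (γ⁻¹ : Γ)).measurable hA

private lemma aux_cancel {a b : ENNReal} (hba : b ≤ a) (ha : a ≠ ⊤) : a * (b / a) = b := by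
  rcases eq_or_ne a 0 with h0 | h0
  · have hb : b = 0 := le_antisymm (h0 ▸ hba) zero_le
    simp [h0, hb]
  · exact ENNReal.mul_div_cancel h0 ha

/-- Under the standing hypotheses (i) and (ii), for a nonzero `β ∈ ℝ` such
that `(N(s)^{-β})_{s ∈ S}` is summable, a `β`-scaling Borel probability measure on `X` is
determined by its normalized restriction to `Y₀`: if two such measures have the same
normalized restriction to `Y₀`, they are equal. -/
theorem scaling_measure_determined_by_restriction_to_boundary
    {Γ X : Type*} [Group Γ] [Countable Γ]
    [TopologicalSpace X] [LocallyCompactSpace X] [SecondCountableTopology X] [T2Space X]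
    [MeasurableSpace X] [BorelSpace X] [MulAction Γ X] [ContinuousConstSMul Γ X]
    (N : Γ →* ℝ) (hN : ∀ γ, 0 < N γ)
    (Y : Set X) (hY : IsClopen Y) (hYcov : (⋃ γ : Γ, γ • Y) = Set.univ)
    (Yn : ℕ → Set X) (γn : ℕ → Γ)
    (hYnMeas : ∀ n, MeasurableSet (Yn n)) (hYnSub : ∀ n, Yn n ⊆ Y)
    (hi : ∀ U : Set X, IsOpen U → boundarySet N Y ⊆ U →
      Y \ (⋃ s ∈ Sset N Y, s • U) ⊆ ⋃ n, Yn n)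
    (hii : ∀ n, N (γn n) ≠ 1 ∧ γn n • Yn n = Yn n)
    (β : ℝ) (hβ : β ≠ 0)
    (hsum : Summable (fun s : Sset N Y => N s.1 ^ (-β)))
    (μ₁ μ₂ : Measure X) [IsProbabilityMeasure μ₁] [IsProbabilityMeasure μ₂]
    (hμ₁ : IsScaling N Y β μ₁) (hμ₂ : IsScaling N Y β μ₂)
    (hagree : ∀ A : Set X, MeasurableSet A → A ⊆ boundarySet N Y →
      μ₁ A / μ₁ (boundarySet N Y) = μ₂ A / μ₂ (boundarySet N Y)) :
    μ₁ = μ₂ := by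
  classical
  set Y₀ : Set X := boundarySet N Y with hY₀def
  have hY₀subY : Y₀ ⊆ Y := Set.diff_subset
  have hY₀closed : IsClosed Y₀ :=
    hY.isClosed.sdiff (isOpen_iUnion fun γ => isOpen_iUnion fun _ => hY.isOpen.smul γ)
  have hY₀meas : MeasurableSet Y₀ := hY₀closed.measurableSet
  have hYmeas : MeasurableSet Y := hY.isClosed.measurableSet
  have hcpos : ∀ γ : Γ, 0 < N γ ^ (-β) := fun γ => Real.rpow_pos_of_pos (hN γ) _
  have hc_ne_one : ∀ γ : Γ, N γ ≠ 1 → ENNReal.ofReal (N γ ^ (-β)) ≠ 1 := by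
    intro γ hγ h
    rw [ENNReal.ofReal_eq_one] at h
    have hlog : Real.log (N γ ^ (-β)) = 0 := by rw [h, Real.log_one]
    rw [Real.log_rpow (hN γ)] at hlog
    rcases mul_eq_zero.1 hlog with h' | h'
    · exact hβ (neg_eq_zero.1 h')
    · rcases Real.log_eq_zero.1 h' with h'' | h'' | h''
      · exact (hN γ).ne' h''
      · exact hγ h''
      · nlinarith [hN γ]
  -- a scaling probability measure gives full mass to `Y` and kills each `Yn`
  have hμY : ∀ (μ : Measure X), IsProbabilityMeasure μ → IsScaling N Y β μ → μ Y = 1 := by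
    intro μ hP hμ
    have h := measure_add_measure_compl (μ := μ) hYmeas
    rw [hμ.1, add_zero, measure_univ] at h
    exact h
  have hYn_null : ∀ (μ : Measure X), IsProbabilityMeasure μ → IsScaling N Y β μ →
      ∀ n, μ (Yn n) = 0 := by
    intro μ hP hμ n
    have h := hμ.2 (γn n) (Yn n) (hYnMeas n) (hYnSub n)
      (by rw [(hii n).2]; exact hYnSub n)
    rw [(hii n).2] at h
    by_contra hne
    refine hc_ne_one (γn n) (hii n).1 ?_
    have h1 : (1 : ENNReal) * μ (Yn n) = ENNReal.ofReal (N (γn n) ^ (-β)) * μ (Yn n) := by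
      rw [one_mul]; exact h
    exact ((ENNReal.mul_left_inj hne (measure_ne_top μ _)).1 h1).symm
  -- a decreasing sequence of open sets squeezing down to `Y₀` inside `Y`
  obtain ⟨V, hVopen, hVeq⟩ : ∃ V : ℕ → Set X, (∀ n, IsOpen (V n)) ∧ Y₀ = ⋂ n, V n := by
    letI : MetricSpace X := TopologicalSpace.metrizableSpaceMetric X
    exact hY₀closed.isGδ.eq_iInter_nat
  set U : ℕ → Set X := fun k => Y ∩ ⋂ j ∈ Finset.range (k + 1), V j with hUdef
  have hUopen : ∀ k, IsOpen (U k) := fun k =>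
    hY.isOpen.inter (isOpen_biInter_finset fun j _ => hVopen j)
  have hUsubY : ∀ k, U k ⊆ Y := fun k => Set.inter_subset_left
  have hY₀U : ∀ k, Y₀ ⊆ U k := by
    intro k
    refine Set.subset_inter hY₀subY ?_
    intro x hx
    simp only [Set.mem_iInter]
    intro j _
    exact Set.mem_iInter.1 (hVeq ▸ hx) j
  have hUanti : Antitone U := by
    intro k l hkl
    refine Set.inter_subset_inter_right _ ?_
    intro x hx
    simp only [Set.mem_iInter] at hx ⊢
    intro j hj
    exact hx j (Finset.mem_range.2 (lt_of_lt_of_le (Finset.mem_range.1 hj) (by omega)))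
  have hUiInter : (⋂ k, U k) ⊆ Y₀ := by
    intro x hx
    rw [hVeq, Set.mem_iInter]
    intro j
    have hxj := (Set.mem_iInter.1 hx j).2
    simp only [Set.mem_iInter] at hxj
    exact hxj j (Finset.mem_range.2 (Nat.lt_succ_self j))
  -- the countable index set
  haveI hEnc : Encodable ↥(Sset N Y) := (nonempty_encodable _).some
  set C : ENNReal := ∑' i : ↥(Sset N Y), ENNReal.ofReal (N i.1 ^ (-β)) with hCdef
  have hCne : C ≠ ⊤ := by
    rw [hCdef, ← ENNReal.ofReal_tsum_of_nonneg (fun i => (hcpos _).le) hsum]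
    exact ENNReal.ofReal_ne_top
  -- key nullity: a scaling probability measure is carried by `⋃_{s ∈ S} s • Y₀`
  have key_null : ∀ (μ : Measure X), IsProbabilityMeasure μ → IsScaling N Y β μ →
      μ (Y \ ⋃ i : ↥(Sset N Y), (i : Γ) • Y₀) = 0 := by
    intro μ hP hμ
    haveI := hP
    have hnullk : ∀ k, μ (Y \ ⋃ i : ↥(Sset N Y), (i : Γ) • U k) = 0 := by
      intro k
      refine measure_mono_null ?_ (measure_iUnion_null fun n => hYn_null μ hP hμ n)
      have h := hi (U k) (hUopen k) (hY₀U k)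
      rwa [Set.biUnion_eq_iUnion] at h
    set Z : Set X := (Y ∩ ⋂ k, ⋃ i : ↥(Sset N Y), (i : Γ) • U k) \
        ⋃ i : ↥(Sset N Y), (i : Γ) • Y₀ with hZdef
    have hZnull : μ Z = 0 := by
      have hbound : ∀ k, μ Z ≤ C * μ (U k \ Y₀) := by
        intro k
        have hsub : Z ⊆ ⋃ i : ↥(Sset N Y), (i : Γ) • ((U k \ Y₀) ∩ (i : Γ)⁻¹ • Y) := by
          rintro x ⟨⟨hxY, hxI⟩, hxW⟩
          obtain ⟨i, hxi⟩ := Set.mem_iUnion.1 (Set.mem_iInter.1 hxI k)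
          obtain ⟨u, huU, rfl⟩ := hxi
          refine Set.mem_iUnion.2 ⟨i, ⟨u, ⟨⟨huU, ?_⟩, ?_⟩, rfl⟩⟩
          · intro huY₀
            exact hxW (Set.mem_iUnion.2 ⟨i, Set.smul_mem_smul_set huY₀⟩)
          · rw [Set.mem_inv_smul_set_iff]
            exact hxY
        calc μ Z ≤ ∑' i : ↥(Sset N Y), μ ((i : Γ) • ((U k \ Y₀) ∩ (i : Γ)⁻¹ • Y)) :=
              (measure_mono hsub).trans (measure_iUnion_le _)
          _ ≤ ∑' i : ↥(Sset N Y), ENNReal.ofReal (N i.1 ^ (-β)) * μ (U k \ Y₀) := by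
              refine ENNReal.tsum_le_tsum fun i => ?_
              have hA : MeasurableSet ((U k \ Y₀) ∩ (i : Γ)⁻¹ • Y) :=
                ((hUopen k).measurableSet.diff hY₀meas).inter (aux_smul_measurableSet _ hYmeas)
              have hAY : (U k \ Y₀) ∩ (i : Γ)⁻¹ • Y ⊆ Y := fun x hx => hUsubY k hx.1.1
              have hAY' : (i : Γ) • ((U k \ Y₀) ∩ (i : Γ)⁻¹ • Y) ⊆ Y := by
                rintro x ⟨u, hu, rfl⟩
                exact Set.mem_inv_smul_set_iff.1 hu.2
              rw [hμ.2 (i : Γ) _ hA hAY hAY']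
              exact mul_le_mul_right (measure_mono Set.inter_subset_left) _
          _ = C * μ (U k \ Y₀) := ENNReal.tsum_mul_right
      have htend : Filter.Tendsto (fun k => C * μ (U k \ Y₀)) Filter.atTop (nhds (C * 0)) := by
        refine ENNReal.Tendsto.const_mul ?_ (Or.inr hCne)
        have h := tendsto_measure_iInter_atTop (μ := μ) (s := fun k => U k \ Y₀)
          (fun k => (((hUopen k).measurableSet).diff hY₀meas).nullMeasurableSet)
          (fun k l hkl => Set.diff_subset_diff_left (hUanti hkl))
          ⟨0, measure_ne_top μ _⟩
        have he : (⋂ k, U k \ Y₀) = (∅ : Set X) := by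
          refine Set.eq_empty_iff_forall_notMem.2 fun x hx => ?_
          have h1 : x ∈ ⋂ k, U k := Set.mem_iInter.2 fun k => (Set.mem_iInter.1 hx k).1
          exact (Set.mem_iInter.1 hx 0).2 (hUiInter h1)
        rw [he] at h
        simpa [Function.comp_def] using h
      have hle : μ Z ≤ C * 0 := ge_of_tendsto' htend hbound
      simpa using hle
    have hcover : Y \ ⋃ i : ↥(Sset N Y), (i : Γ) • Y₀ ⊆
        (⋃ k, Y \ ⋃ i : ↥(Sset N Y), (i : Γ) • U k) ∪ Z := by
      intro x hx
      by_cases hall : ∀ k, x ∈ ⋃ i : ↥(Sset N Y), (i : Γ) • U k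
      · exact Or.inr ⟨⟨hx.1, Set.mem_iInter.2 hall⟩, hx.2⟩
      · push_neg at hall
        obtain ⟨k, hk⟩ := hall
        exact Or.inl (Set.mem_iUnion.2 ⟨k, hx.1, hk⟩)
    exact measure_mono_null hcover (measure_union_null (measure_iUnion_null hnullk) hZnull)
  -- the countable a.e. partition of `Y`
  set g : ℕ → Γ := fun n =>
    if h : ∃ i : ↥(Sset N Y), Encodable.encode i = n then (h.choose : Γ) else 1 with hgdef
  set F : ℕ → Set X := fun n =>
    if ∃ i : ↥(Sset N Y), Encodable.encode i = n then (g n • Y₀) ∩ Y else ∅ with hFdef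
  have hg_encode : ∀ i : ↥(Sset N Y), g (Encodable.encode i) = (i : Γ) := by
    intro i
    have h : ∃ j : ↥(Sset N Y), Encodable.encode j = Encodable.encode i := ⟨i, rfl⟩
    have hch : h.choose = i := Encodable.encode_injective h.choose_spec
    simp only [hgdef, dif_pos h, hch]
  have hF_encode : ∀ i : ↥(Sset N Y), F (Encodable.encode i) = ((i : Γ) • Y₀) ∩ Y := by
    intro i
    simp only [hFdef, if_pos (⟨i, rfl⟩ : ∃ j : ↥(Sset N Y), Encodable.encode j = Encodable.encode i),
      hg_encode i]
  have hF_empty : ∀ n, (¬ ∃ i : ↥(Sset N Y), Encodable.encode i = n) → F n = ∅ := by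
    intro n h
    simp only [hFdef, if_neg h]
  have hFmeas : ∀ n, MeasurableSet (F n) := by
    intro n
    by_cases h : ∃ i : ↥(Sset N Y), Encodable.encode i = n
    · simp only [hFdef, if_pos h]
      exact (aux_smul_measurableSet _ hY₀meas).inter hYmeas
    · rw [hF_empty n h]; exact MeasurableSet.empty
  have hFsubY : ∀ n, F n ⊆ Y := by
    intro n
    by_cases h : ∃ i : ↥(Sset N Y), Encodable.encode i = n
    · simp only [hFdef, if_pos h]; exact Set.inter_subset_right
    · rw [hF_empty n h]; exact Set.empty_subset _
  have hFsub : ∀ n, F n ⊆ g n • Y₀ := by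
    intro n
    by_cases h : ∃ i : ↥(Sset N Y), Encodable.encode i = n
    · simp only [hFdef, if_pos h]; exact Set.inter_subset_left
    · rw [hF_empty n h]; exact Set.empty_subset _
  have hFU : (⋃ n, F n) = ⋃ i : ↥(Sset N Y), (((i : Γ) • Y₀) ∩ Y) := by
    apply Set.Subset.antisymm
    · refine Set.iUnion_subset fun n => ?_
      by_cases h : ∃ i : ↥(Sset N Y), Encodable.encode i = n
      · obtain ⟨i, rfl⟩ := h
        rw [hF_encode i]
        exact Set.subset_iUnion (fun i : ↥(Sset N Y) => ((i : Γ) • Y₀) ∩ Y) i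
      · rw [hF_empty n h]; exact Set.empty_subset _
    · refine Set.iUnion_subset fun i => ?_
      rw [← hF_encode i]
      exact Set.subset_iUnion F _
  set D : ℕ → Set X := disjointed F with hDdef
  have hDmeas : ∀ n, MeasurableSet (D n) := fun n => MeasurableSet.disjointed hFmeas n
  have hDsub : ∀ n, D n ⊆ F n := disjointed_subset F
  have hDdisj : Pairwise (Function.onFun Disjoint D) := disjoint_disjointed F
  have hDU : (⋃ n, D n) = ⋃ i : ↥(Sset N Y), (((i : Γ) • Y₀) ∩ Y) := by
    rw [hDdef, iUnion_disjointed, hFU]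
  -- the reconstruction functional
  set T : Set X → ENNReal := fun A =>
    ∑' n, ENNReal.ofReal (N (g n) ^ (-β)) * (μ₁ ((g n)⁻¹ • (A ∩ D n)) / μ₁ Y₀) with hTdef
  have hBsub : ∀ (A : Set X) (n : ℕ), (g n)⁻¹ • (A ∩ D n) ⊆ Y₀ := by
    intro A n
    have h1 : A ∩ D n ⊆ g n • Y₀ := fun x hx => hFsub n (hDsub n hx.2)
    have h2 := Set.smul_set_mono (a := (g n)⁻¹) h1
    rwa [inv_smul_smul] at h2
  have hterm : ∀ (μ : Measure X), IsScaling N Y β μ →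
      ∀ (A : Set X), MeasurableSet A → ∀ n,
      μ (A ∩ D n) = ENNReal.ofReal (N (g n) ^ (-β)) * μ ((g n)⁻¹ • (A ∩ D n)) := by
    intro μ hμ A hA n
    have hmeasAD : MeasurableSet (A ∩ D n) := hA.inter (hDmeas n)
    have hBmeas : MeasurableSet ((g n)⁻¹ • (A ∩ D n)) := aux_smul_measurableSet _ hmeasAD
    have hBsmul : (g n) • ((g n)⁻¹ • (A ∩ D n)) = A ∩ D n := smul_inv_smul _ _
    have h := hμ.2 (g n) _ hBmeas ((hBsub A n).trans hY₀subY)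
      (by rw [hBsmul]; exact fun x hx => hFsubY n (hDsub n hx.2))
    rw [hBsmul] at h
    exact h
  -- the reconstruction formula
  have hform : ∀ (μ : Measure X), IsProbabilityMeasure μ → IsScaling N Y β μ →
      (∀ B : Set X, MeasurableSet B → B ⊆ Y₀ → μ B = μ Y₀ * (μ₁ B / μ₁ Y₀)) →
      ∀ A : Set X, MeasurableSet A → A ⊆ Y → μ A = μ Y₀ * T A := by
    intro μ hP hμ hrestr A hA hAY
    haveI := hP
    have hDUm : MeasurableSet (⋃ n, D n) := MeasurableSet.iUnion hDmeas
    have h1 : μ A = μ (A ∩ ⋃ n, D n) := by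
      have hd : μ (A \ ⋃ n, D n) = 0 := by
        refine measure_mono_null ?_ (key_null μ hP hμ)
        intro x hx
        refine ⟨hAY hx.1, fun hxW => hx.2 ?_⟩
        rw [hDU]
        obtain ⟨i, hi'⟩ := Set.mem_iUnion.1 hxW
        exact Set.mem_iUnion.2 ⟨i, hi', hAY hx.1⟩
      have h2 := measure_inter_add_diff (μ := μ) A hDUm
      rw [hd, add_zero] at h2
      exact h2.symm
    have hBmeas : ∀ n, MeasurableSet ((g n)⁻¹ • (A ∩ D n)) :=
      fun n => aux_smul_measurableSet _ (hA.inter (hDmeas n))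
    calc μ A = μ (⋃ n, A ∩ D n) := by rw [← Set.inter_iUnion]; exact h1
      _ = ∑' n, μ (A ∩ D n) :=
          measure_iUnion
            (fun m n hmn => (hDdisj hmn).mono Set.inter_subset_right Set.inter_subset_right)
            (fun n => hA.inter (hDmeas n))
      _ = ∑' n, ENNReal.ofReal (N (g n) ^ (-β)) *
            (μ Y₀ * (μ₁ ((g n)⁻¹ • (A ∩ D n)) / μ₁ Y₀)) := by
          refine tsum_congr fun n => ?_
          rw [hterm μ hμ A hA n, hrestr _ (hBmeas n) (hBsub A n)]
      _ = μ Y₀ * T A := by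
          rw [hTdef, ← ENNReal.tsum_mul_left]
          exact tsum_congr fun n => by ring
  have hrestr₁ : ∀ B : Set X, MeasurableSet B → B ⊆ Y₀ → μ₁ B = μ₁ Y₀ * (μ₁ B / μ₁ Y₀) :=
    fun B hB hBs => (aux_cancel (measure_mono hBs) (measure_ne_top _ _)).symm
  have hrestr₂ : ∀ B : Set X, MeasurableSet B → B ⊆ Y₀ → μ₂ B = μ₂ Y₀ * (μ₁ B / μ₁ Y₀) := by
    intro B hB hBs
    rw [hagree B hB hBs]
    exact (aux_cancel (measure_mono hBs) (measure_ne_top _ _)).symm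
  have e₁ : (1 : ENNReal) = μ₁ Y₀ * T Y := by
    rw [← hμY μ₁ inferInstance hμ₁]
    exact hform μ₁ inferInstance hμ₁ hrestr₁ Y hYmeas subset_rfl
  have e₂ : (1 : ENNReal) = μ₂ Y₀ * T Y := by
    rw [← hμY μ₂ inferInstance hμ₂]
    exact hform μ₂ inferInstance hμ₂ hrestr₂ Y hYmeas subset_rfl
  have hT0 : T Y ≠ 0 := by
    intro h
    rw [h, mul_zero] at e₁
    exact one_ne_zero e₁
  have hTtop : T Y ≠ ⊤ := by
    intro h
    rw [h] at e₁
    rcases eq_or_ne (μ₁ Y₀) 0 with h0 | h0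
    · rw [h0, zero_mul] at e₁; exact one_ne_zero e₁
    · rw [ENNReal.mul_top h0] at e₁; exact ENNReal.one_ne_top e₁
  have hY₀eq : μ₁ Y₀ = μ₂ Y₀ :=
    (ENNReal.mul_left_inj hT0 hTtop).1 (e₁.symm.trans e₂)
  refine Measure.ext fun s hs => ?_
  have h1 : μ₁ s = μ₁ (s ∩ Y) := by
    have hd : μ₁ (s \ Y) = 0 := measure_mono_null (fun x hx => hx.2) hμ₁.1
    have h2 := measure_inter_add_diff (μ := μ₁) s hYmeas
    rw [hd, add_zero] at h2
    exact h2.symm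
  have h2 : μ₂ s = μ₂ (s ∩ Y) := by
    have hd : μ₂ (s \ Y) = 0 := measure_mono_null (fun x hx => hx.2) hμ₂.1
    have h2 := measure_inter_add_diff (μ := μ₂) s hYmeas
    rw [hd, add_zero] at h2
    exact h2.symm
  rw [h1, h2, hform μ₁ inferInstance hμ₁ hrestr₁ _ (hs.inter hYmeas) Set.inter_subset_right,
    hform μ₂ inferInstance hμ₂ hrestr₂ _ (hs.inter hYmeas) Set.inter_subset_right, hY₀eq]
end

section
/- Let β ∈ ℝ and let ν be a Borel measure on X with ν(X ∖ Y₀) = 0, ν(Y₀) = 1, and ν(γ·A) = ν(A) for every γ ∈ ker N and every Borel set A ⊆ Y₀ with γ·A ⊆ Y₀. Then there exists a Borel measure μ̃ on X such that: μ̃(γ·A) = N(γ)^{-β}·μ̃(A) for every γ ∈ Γ and every Borel set A ⊆ X; μ̃(A) = ν(A) for every Borel set A ⊆ Y₀; μ̃(X ∖ Γ·Y₀) = 0; and, if the family (N(s)^{-β})_{s ∈ S} is summable with sum Z, then μ̃(Y) ≤ Z. -/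
open Pointwise MeasureTheory

/-- Let `β ∈ ℝ` and let `ν` be a Borel measure concentrated on `Y₀` with
`ν(Y₀) = 1` that is invariant under the partial action of `ker N` on `Y₀`. Then `ν` extends
to a Borel measure `μ̃` on `X` satisfying `μ̃(γ·A) = N(γ)^{-β}·μ̃(A)` for every Borel `A ⊆ X`,
agreeing with `ν` on Borel subsets of `Y₀`, concentrated on `Γ·Y₀`, and with `μ̃(Y) ≤ Z`
whenever `(N(s)^{-β})_{s ∈ S}` is summable with sum `Z`. -/
theorem exists_scaling_extension_of_invariant_measure_on_boundary
    {Γ X : Type*} [Group Γ] [Countable Γ]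
    [TopologicalSpace X] [LocallyCompactSpace X] [SecondCountableTopology X] [T2Space X]
    [MeasurableSpace X] [BorelSpace X] [MulAction Γ X] [ContinuousConstSMul Γ X]
    (N : Γ →* ℝ) (hN : ∀ γ, 0 < N γ)
    (Y : Set X) (hY : IsClopen Y) (hYcov : (⋃ γ : Γ, γ • Y) = Set.univ)
    (β : ℝ) (ν : Measure X)
    (hν0 : ν ((boundarySet N Y)ᶜ) = 0) (hν1 : ν (boundarySet N Y) = 1)
    (hinv : ∀ γ : Γ, N γ = 1 → ∀ A : Set X, MeasurableSet A → A ⊆ boundarySet N Y →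
      γ • A ⊆ boundarySet N Y → ν (γ • A) = ν A) :
    ∃ μt : Measure X,
      (∀ (γ : Γ) (A : Set X), MeasurableSet A →
        μt (γ • A) = ENNReal.ofReal (N γ ^ (-β)) * μt A) ∧
      (∀ A : Set X, MeasurableSet A → A ⊆ boundarySet N Y → μt A = ν A) ∧
      μt ((⋃ γ : Γ, γ • boundarySet N Y)ᶜ) = 0 ∧
      (∀ Z : ℝ, HasSum (fun s : Sset N Y => N s.1 ^ (-β)) Z →
        μt Y ≤ ENNReal.ofReal Z) := by
  classical
  obtain ⟨ι, hι⟩ := Countable.exists_injective_nat Γ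
  set Y₀ := boundarySet N Y with hY₀def
  -- basic measurability facts
  have hsm : ∀ (γ : Γ) (A : Set X), MeasurableSet A → MeasurableSet (γ • A) := by
    intro γ A hA
    rw [show γ • A = (fun x => γ⁻¹ • x) ⁻¹' A by rw [Set.preimage_smul, inv_inv]]
    exact (continuous_const_smul γ⁻¹).measurable hA
  have hYm : MeasurableSet Y := hY.isClosed.measurableSet
  have hY₀m : MeasurableSet Y₀ := by
    rw [hY₀def, boundarySet]
    exact hYm.diff (MeasurableSet.iUnion fun γ => MeasurableSet.iUnion fun _ => hsm γ Y hYm)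
  -- N inverse formula
  have hNinv : ∀ g : Γ, N g⁻¹ = (N g)⁻¹ := by
    intro g
    have h := map_mul N g⁻¹ g
    rw [inv_mul_cancel, map_one] at h
    exact eq_inv_of_mul_eq_one_left h.symm
  -- key pointwise lemma
  have hker : ∀ (g : Γ) (y : X), y ∈ Y₀ → g • y ∈ Y₀ → N g = 1 := by
    intro g y hy hgy
    rw [hY₀def, boundarySet] at hy hgy
    obtain ⟨hyY, hy2⟩ := hy
    obtain ⟨hgyY, hgy2⟩ := hgy
    by_contra hne
    rcases lt_or_gt_of_ne hne with hlt | hgt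
    · apply hy2
      refine Set.mem_iUnion.2 ⟨g⁻¹, Set.mem_iUnion.2 ⟨?_, ?_⟩⟩
      · rw [hNinv]; exact (one_lt_inv₀ (hN g)).2 hlt
      · exact ⟨g • y, hgyY, inv_smul_smul g y⟩
    · exact hgy2 (Set.mem_iUnion.2 ⟨g, Set.mem_iUnion.2 ⟨hgt, ⟨y, hyY, rfl⟩⟩⟩)
  have hNeq : ∀ (γ₁ γ₂ : Γ) (x : X), x ∈ γ₁ • Y₀ → x ∈ γ₂ • Y₀ → N γ₁ = N γ₂ := by
    rintro γ₁ γ₂ x ⟨y, hy, rfl⟩ h2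
    have h3 : (γ₂⁻¹ * γ₁) • y ∈ Y₀ := by
      rw [mul_smul]
      exact Set.mem_smul_set_iff_inv_smul_mem.mp h2
    have h4 := hker _ y hy h3
    rw [map_mul, hNinv] at h4
    have h5 : (N γ₂)⁻¹ * N γ₁ = 1 := h4
    exact ((inv_mul_eq_one₀ (hN γ₂).ne').mp h5).symm
  -- transfer of invariance
  have hinv' : ∀ (γ₁ γ₂ : Γ) (C : Set X), MeasurableSet C → C ⊆ γ₁ • Y₀ → C ⊆ γ₂ • Y₀ →
      ν (γ₁⁻¹ • C) = ν (γ₂⁻¹ • C) := by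
    intro γ₁ γ₂ C hC h1 h2
    rcases C.eq_empty_or_nonempty with rfl | ⟨x, hx⟩
    · rw [Set.smul_set_empty, Set.smul_set_empty]
    · have hNe : N γ₁ = N γ₂ := hNeq γ₁ γ₂ x (h1 hx) (h2 hx)
      have e : (γ₂⁻¹ * γ₁) • (γ₁⁻¹ • C) = γ₂⁻¹ • C := by
        rw [smul_smul, mul_inv_cancel_right]
      have hN1 : N (γ₂⁻¹ * γ₁) = 1 := by
        rw [map_mul, hNinv, ← hNe, inv_mul_cancel₀ (hN γ₁).ne']
      have hsub1 : γ₁⁻¹ • C ⊆ Y₀ := by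
        have := Set.smul_set_mono (a := γ₁⁻¹) h1
        rwa [inv_smul_smul] at this
      have hsub2 : (γ₂⁻¹ * γ₁) • (γ₁⁻¹ • C) ⊆ Y₀ := by
        rw [e]
        have := Set.smul_set_mono (a := γ₂⁻¹) h2
        rwa [inv_smul_smul] at this
      have hkey := hinv (γ₂⁻¹ * γ₁) hN1 (γ₁⁻¹ • C) (hsm _ _ hC) hsub1 hsub2
      rw [e] at hkey
      exact hkey.symm
  -- the disjointification
  set E : Γ → Set X := fun γ => γ • Y₀ \ ⋃ (γ' : Γ) (_ : ι γ' < ι γ), γ' • Y₀ with hEdef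
  have hEm : ∀ γ, MeasurableSet (E γ) := by
    intro γ
    rw [hEdef]
    exact (hsm γ Y₀ hY₀m).diff
      (MeasurableSet.iUnion fun γ' => MeasurableSet.iUnion fun _ => hsm γ' Y₀ hY₀m)
  have hEsub : ∀ γ, E γ ⊆ γ • Y₀ := fun γ => Set.diff_subset
  have hEdisj : Pairwise (Function.onFun Disjoint E) := by
    have key : ∀ a b : Γ, ι a < ι b → Disjoint (E a) (E b) := by
      intro a b hab
      rw [Set.disjoint_left]
      intro x hxa hxb
      exact hxb.2 (Set.mem_iUnion.2 ⟨a, Set.mem_iUnion.2 ⟨hab, hxa.1⟩⟩)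
    intro a b hab
    rcases (hι.ne hab).lt_or_gt with h | h
    · exact key a b h
    · exact (key b a h).symm
  have hEunion : (⋃ γ, E γ) = ⋃ γ : Γ, γ • Y₀ := by
    apply Set.Subset.antisymm (Set.iUnion_mono hEsub)
    intro x hx
    have hex : ∃ n, ∃ γ : Γ, ι γ = n ∧ x ∈ γ • Y₀ := by
      obtain ⟨γ, hγ⟩ := Set.mem_iUnion.1 hx
      exact ⟨ι γ, γ, rfl, hγ⟩
    obtain ⟨γ₀, hγ₀, hx0⟩ := Nat.find_spec hex
    refine Set.mem_iUnion.2 ⟨γ₀, hx0, ?_⟩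
    intro hmem
    obtain ⟨γ', h'⟩ := Set.mem_iUnion.1 hmem
    obtain ⟨hlt, hx'⟩ := Set.mem_iUnion.1 h'
    rw [hγ₀] at hlt
    exact Nat.find_min hex hlt ⟨γ', rfl, hx'⟩
  -- disjointness is preserved by translation
  have hdsmul : ∀ (g : Γ) (s t : Set X), Disjoint s t → Disjoint (g • s) (g • t) := by
    intro g s t h
    rw [Set.disjoint_iff_inter_eq_empty] at h ⊢
    rw [← Set.smul_set_inter, h, Set.smul_set_empty]
  -- the scaling constants and the measure
  set c : Γ → ENNReal := fun γ => ENNReal.ofReal (N γ ^ (-β)) with hcdef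
  set μt : Measure X :=
    Measure.sum (fun γ : Γ => c γ • (Measure.map (fun x => γ • x) ν).restrict (E γ)) with hμdef
  have hμapp : ∀ A : Set X, MeasurableSet A →
      μt A = ∑' γ : Γ, c γ * ν (γ⁻¹ • (A ∩ E γ)) := by
    intro A hA
    rw [hμdef, Measure.sum_apply _ hA]
    congr 1
    funext γ
    rw [Measure.smul_apply, smul_eq_mul, Measure.restrict_apply hA,
      Measure.map_apply (continuous_const_smul γ).measurable (hA.inter (hEm γ)),
      Set.preimage_smul]
  -- the key formula
  have hKey : ∀ (γ : Γ) (B : Set X), MeasurableSet B → B ⊆ γ • Y₀ →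
      μt B = c γ * ν (γ⁻¹ • B) := by
    intro γ B hB hBsub
    rw [hμapp B hB]
    have hterm : ∀ γ' : Γ, c γ' * ν (γ'⁻¹ • (B ∩ E γ')) = c γ * ν (γ⁻¹ • (B ∩ E γ')) := by
      intro γ'
      rcases (B ∩ E γ').eq_empty_or_nonempty with he | ⟨x, hx⟩
      · simp [he]
      · have hNe : N γ' = N γ := hNeq γ' γ x (hEsub γ' hx.2) (hBsub hx.1)
        have hc : c γ' = c γ := by rw [hcdef]; simp only [hNe]
        rw [hc, hinv' γ' γ (B ∩ E γ') (hB.inter (hEm γ'))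
          (fun y hy => hEsub γ' hy.2) (fun y hy => hBsub hy.1)]
    simp_rw [hterm]
    rw [ENNReal.tsum_mul_left]
    congr 1
    have hd : Pairwise (Function.onFun Disjoint fun γ' => γ⁻¹ • (B ∩ E γ')) := by
      intro a b hab
      exact hdsmul γ⁻¹ _ _
        ((hEdisj hab).mono Set.inter_subset_right Set.inter_subset_right)
    rw [← measure_iUnion hd (fun γ' => hsm γ⁻¹ _ (hB.inter (hEm γ')))]
    congr 1
    rw [← Set.smul_set_iUnion, ← Set.inter_iUnion, hEunion,
      Set.inter_eq_left.2 (hBsub.trans (Set.subset_iUnion (fun g : Γ => g • Y₀) γ))]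
  -- conclusion 2
  have hconc2 : ∀ A : Set X, MeasurableSet A → A ⊆ Y₀ → μt A = ν A := by
    intro A hA hAs
    have h1 : A ⊆ (1 : Γ) • Y₀ := by rwa [one_smul]
    rw [hKey 1 A hA h1, inv_one, one_smul]
    rw [hcdef]
    simp only [map_one, Real.one_rpow, ENNReal.ofReal_one, one_mul]
  -- conclusion 3
  set U := ⋃ γ : Γ, γ • Y₀ with hUdef
  have hUm : MeasurableSet U := MeasurableSet.iUnion fun γ => hsm γ _ hY₀m
  have hconc3 : μt Uᶜ = 0 := by
    rw [hμapp _ hUm.compl]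
    have hz : ∀ γ : Γ, Uᶜ ∩ E γ = ∅ := by
      intro γ
      rw [Set.eq_empty_iff_forall_notMem]
      rintro x ⟨hx1, hx2⟩
      exact hx1 (Set.mem_iUnion.2 ⟨γ, hEsub γ hx2⟩)
    simp [hz, Set.smul_set_empty]
  -- translation invariance of U
  have hUinv : ∀ γ : Γ, γ • U = U := by
    intro γ
    rw [hUdef, Set.smul_set_iUnion]
    apply Set.Subset.antisymm
    · refine Set.iUnion_subset fun γ' => ?_
      rw [smul_smul]
      exact Set.subset_iUnion (fun g : Γ => g • Y₀) (γ * γ')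
    · refine Set.iUnion_subset fun γ' => ?_
      have e : γ' • Y₀ = γ • ((γ⁻¹ * γ') • Y₀) := by
        rw [smul_smul, mul_inv_cancel_left]
      rw [e]
      exact Set.subset_iUnion (fun g : Γ => γ • (g • Y₀)) (γ⁻¹ * γ')
  have hae : ∀ A : Set X, MeasurableSet A → μt A = μt (A ∩ U) := by
    intro A hA
    rw [← measure_inter_add_diff A hUm]
    have h0 : μt (A \ U) = 0 :=
      measure_mono_null (fun x hx => hx.2) hconc3
    rw [h0, add_zero]
  -- conclusion 1 : scaling
  have hconc1 : ∀ (γ : Γ) (A : Set X), MeasurableSet A →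
      μt (γ • A) = ENNReal.ofReal (N γ ^ (-β)) * μt A := by
    intro γ A hA
    have hc' : ENNReal.ofReal (N γ ^ (-β)) = c γ := by rw [hcdef]
    rw [hc']
    have hgAm : MeasurableSet (γ • A) := hsm γ A hA
    rw [hae _ hgAm, hae A hA]
    have e1 : γ • A ∩ U = γ • (A ∩ U) := by rw [Set.smul_set_inter, hUinv γ]
    have e2 : A ∩ U = ⋃ γ' : Γ, A ∩ E γ' := by
      rw [← hEunion, Set.inter_iUnion]
    have hd₂ : Pairwise (Function.onFun Disjoint fun γ' : Γ => A ∩ E γ') := fun a b hab =>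
      (hEdisj hab).mono Set.inter_subset_right Set.inter_subset_right
    have hd₁ : Pairwise (Function.onFun Disjoint fun γ' : Γ => γ • (A ∩ E γ')) :=
      fun a b hab => hdsmul γ _ _ (hd₂ hab)
    have hmeas₂ : ∀ γ' : Γ, MeasurableSet (A ∩ E γ') := fun γ' => hA.inter (hEm γ')
    have hmeas₁ : ∀ γ' : Γ, MeasurableSet (γ • (A ∩ E γ')) := fun γ' => hsm γ _ (hmeas₂ γ')
    rw [e1, e2, Set.smul_set_iUnion, measure_iUnion hd₁ hmeas₁,
      measure_iUnion hd₂ hmeas₂, ← ENNReal.tsum_mul_left]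
    congr 1
    funext γ'
    have hsub₂ : A ∩ E γ' ⊆ γ' • Y₀ := fun y hy => hEsub γ' hy.2
    have hsub₁ : γ • (A ∩ E γ') ⊆ (γ * γ') • Y₀ := by
      rw [mul_smul]
      exact Set.smul_set_mono hsub₂
    rw [hKey (γ * γ') _ (hmeas₁ γ') hsub₁, hKey γ' _ (hmeas₂ γ') hsub₂]
    have e3 : (γ * γ')⁻¹ • (γ • (A ∩ E γ')) = γ'⁻¹ • (A ∩ E γ') := by
      rw [smul_smul, mul_inv_rev, inv_mul_cancel_right]
    have e4 : c (γ * γ') = c γ * c γ' := by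
      rw [hcdef]
      simp only [map_mul]
      rw [Real.mul_rpow (hN γ).le (hN γ').le,
        ENNReal.ofReal_mul (Real.rpow_nonneg (hN γ).le _)]
    rw [e3, e4, mul_assoc]
  -- conclusion 4
  have hconc4 : ∀ Z : ℝ, HasSum (fun s : Sset N Y => N s.1 ^ (-β)) Z →
      μt Y ≤ ENNReal.ofReal Z := by
    intro Z hZ
    rw [hμapp Y hYm]
    have hterm : ∀ γ : Γ, c γ * ν (γ⁻¹ • (Y ∩ E γ)) ≤ Set.indicator (Sset N Y) c γ := by
      intro γ
      by_cases hγ : γ ∈ Sset N Y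
      · rw [Set.indicator_of_mem hγ]
        have hb : ν (γ⁻¹ • (Y ∩ E γ)) ≤ 1 := by
          rw [← hν1]
          refine measure_mono ?_
          have := Set.smul_set_mono (a := γ⁻¹) (fun y hy => hEsub γ hy.2 :
            Y ∩ E γ ⊆ γ • Y₀)
          rwa [inv_smul_smul] at this
        calc c γ * ν (γ⁻¹ • (Y ∩ E γ)) ≤ c γ * 1 := mul_le_mul_right hb _
          _ = c γ := mul_one _
      · rw [Set.indicator_of_notMem hγ]
        have hz : Y ∩ E γ = ∅ := by
          rw [Set.eq_empty_iff_forall_notMem]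
          rintro x ⟨hxY, hxE⟩
          refine hγ ⟨x, ?_, hxY⟩
          rw [← hY₀def]
          exact hEsub γ hxE
        rw [hz, Set.smul_set_empty]
        simp
    calc (∑' γ : Γ, c γ * ν (γ⁻¹ • (Y ∩ E γ)))
        ≤ ∑' γ : Γ, Set.indicator (Sset N Y) c γ := ENNReal.tsum_le_tsum hterm
      _ = ∑' s : Sset N Y, c s := (tsum_subtype (Sset N Y) c).symm
      _ = ENNReal.ofReal Z := by
          rw [← hZ.tsum_eq,
            ENNReal.ofReal_tsum_of_nonneg (fun s => Real.rpow_nonneg (hN _).le _)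
              hZ.summable]
  exact ⟨μt, hconc1, hconc2, hconc3, hconc4⟩
end

section
/- Assume the standing hypotheses (i) and (ii), let β be a nonzero real number, and suppose the family (N(s)^{-β})_{s ∈ S} is summable. Then every β-scaling Borel probability measure μ on X satisfies μ(Y ∖ Y₀) ≤ μ(Y₀) · Σ_{s ∈ S, N(s) > 1} N(s)^{-β}, and consequently μ(Y₀) ≥ (1 + Σ_{s ∈ S, N(s) > 1} N(s)^{-β})^{-1}. -/
open Pointwise MeasureTheory
open scoped ENNReal

private lemma smul_mem_boundary' {Γ X : Type*} [Group Γ] [MulAction Γ X]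
    (N : Γ →* ℝ) (hN : ∀ γ, 0 < N γ) (Y : Set X) {s : Γ} (hs : N s ≤ 1)
    {u : X} (hu : u ∈ boundarySet N Y) (hsu : s • u ∈ Y) : s • u ∈ boundarySet N Y := by
  refine ⟨hsu, fun hmem => ?_⟩
  simp only [Set.mem_iUnion] at hmem
  obtain ⟨γ, hγ, hx⟩ := hmem
  apply hu.2
  simp only [Set.mem_iUnion]
  refine ⟨s⁻¹ * γ, ?_, ?_⟩
  · have h1 : N s⁻¹ * N s = 1 := by rw [← map_mul, inv_mul_cancel, map_one]
    have h2 : N (s⁻¹ * γ) = N s⁻¹ * N γ := map_mul N _ _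
    have hNs := hN s
    have hNsi := hN s⁻¹
    nlinarith [hγ]
  · rw [Set.mem_smul_set_iff_inv_smul_mem] at hx ⊢
    rwa [mul_inv_rev, inv_inv, mul_smul]

private lemma smul_measurableSet' {Γ X : Type*} [Group Γ] [TopologicalSpace X]
    [MeasurableSpace X] [BorelSpace X] [MulAction Γ X] [ContinuousConstSMul Γ X]
    (s : Γ) {Y : Set X} (h : MeasurableSet Y) : MeasurableSet (s • Y) := by
  rw [show s • Y = (fun x => s⁻¹ • x) ⁻¹' Y by rw [Set.preimage_smul, inv_inv]]
  exact h.preimage (continuous_const_smul _).measurable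


private lemma subt_inj {Γ : Type*} (S : Set Γ) (P : Γ → Prop) :
    Function.Injective (fun t : {γ : Γ // γ ∈ S ∧ P γ} => (⟨t.1, t.2.1⟩ : S)) := by
  intro a b h
  simp only [Subtype.mk.injEq] at h
  exact Subtype.ext h

private lemma tsum_ite_subtype {Γ : Type*} (S : Set Γ) (P : Γ → Prop) [DecidablePred P]
    (c : Γ → ℝ≥0∞) :
    ∑' s : S, (if P s.1 then c s.1 else 0) = ∑' t : {γ : Γ // γ ∈ S ∧ P γ}, c t.1 := by
  have hsupp : Function.support (fun s : S => if P s.1 then c s.1 else 0) ⊆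
      Set.range (fun t : {γ : Γ // γ ∈ S ∧ P γ} => (⟨t.1, t.2.1⟩ : S)) := by
    intro s hs
    by_cases h : P s.1
    · exact ⟨⟨s.1, s.2, h⟩, rfl⟩
    · simp only [Function.mem_support, if_neg h, ne_eq, not_true_eq_false] at hs
  have h2 := (subt_inj S P).tsum_eq (f := fun s : S => if P s.1 then c s.1 else 0) hsupp
  rw [← h2]
  exact tsum_congr fun t => if_pos t.2.2

private lemma summable_subt {Γ : Type*} (S : Set Γ) (P : Γ → Prop) (f : Γ → ℝ)
    (h : Summable (fun s : S => f s.1)) :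
    Summable (fun t : {γ : Γ // γ ∈ S ∧ P γ} => f t.1) :=
  h.comp_injective (subt_inj S P)

private lemma enn_inv_le {a b : ℝ≥0∞} (hb0 : b ≠ 0) (hbt : b ≠ ⊤) (h : 1 ≤ a * b) : b⁻¹ ≤ a :=
  calc b⁻¹ = b⁻¹ * 1 := (mul_one _).symm
    _ ≤ b⁻¹ * (a * b) := mul_le_mul_right h _
    _ = a * (b⁻¹ * b) := by ring
    _ = a := by rw [ENNReal.inv_mul_cancel hb0 hbt, mul_one]

open Classical in
private lemma key_estimate
    {Γ X : Type*} [Group Γ] [Countable Γ]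
    [TopologicalSpace X] [LocallyCompactSpace X] [SecondCountableTopology X] [T2Space X]
    [MeasurableSpace X] [BorelSpace X] [MulAction Γ X] [ContinuousConstSMul Γ X]
    (N : Γ →* ℝ) (hN : ∀ γ, 0 < N γ)
    (Y : Set X) (hY : IsClopen Y)
    (Yn : ℕ → Set X)
    (hi : ∀ U : Set X, IsOpen U → boundarySet N Y ⊆ U →
      Y \ (⋃ s ∈ Sset N Y, s • U) ⊆ ⋃ n, Yn n)
    (β : ℝ)
    (μ : Measure X) [IsProbabilityMeasure μ] (hμ : IsScaling N Y β μ)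
    (hY₀m : MeasurableSet (boundarySet N Y))
    (hYnU0 : μ (⋃ n, Yn n) = 0)
    (ε : ℝ≥0∞) (hε : ε ≠ 0) :
    μ (Y \ boundarySet N Y) ≤
      (∑' t : {γ : Γ // γ ∈ Sset N Y ∧ 1 < N γ}, ENNReal.ofReal (N t.1 ^ (-β))) *
          μ (boundarySet N Y) +
        (∑' s : Sset N Y, ENNReal.ofReal (N s.1 ^ (-β))) * ε := by
  have hY₀Y : boundarySet N Y ⊆ Y := Set.diff_subset
  have hμY₀top : μ (boundarySet N Y) ≠ ⊤ := measure_ne_top μ _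
  obtain ⟨U', hU'sup, hU'open, hU'lt⟩ :=
    Set.exists_isOpen_lt_add (boundarySet N Y) hμY₀top hε
  have hUopen : IsOpen (U' ∩ Y) := hU'open.inter hY.2
  have hY₀U : boundarySet N Y ⊆ U' ∩ Y := Set.subset_inter hU'sup hY₀Y
  have hUY : U' ∩ Y ⊆ Y := Set.inter_subset_right
  have hUm : MeasurableSet (U' ∩ Y) := hUopen.measurableSet
  have hUd : μ ((U' ∩ Y) \ boundarySet N Y) ≤ ε := by
    have h1 : μ (U' \ boundarySet N Y) < ε :=
      measure_diff_lt_of_lt_add hY₀m.nullMeasurableSet hU'sup hμY₀top hU'lt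
    exact le_of_lt (lt_of_le_of_lt
      (measure_mono (Set.diff_subset_diff_left Set.inter_subset_left)) h1)
  have hcov := hi (U' ∩ Y) hUopen hY₀U
  have hsubu : Y \ boundarySet N Y ⊆
      (⋃ n, Yn n) ∪ ⋃ s ∈ Sset N Y, ((Y \ boundarySet N Y) ∩ s • (U' ∩ Y)) := by
    intro x hx
    by_cases hxs : x ∈ ⋃ s ∈ Sset N Y, s • (U' ∩ Y)
    · right
      simp only [Set.mem_iUnion] at hxs ⊢
      obtain ⟨s, hsS, hxu⟩ := hxs
      exact ⟨s, hsS, hx, hxu⟩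
    · left
      exact hcov ⟨hx.1, hxs⟩
  have hstep1 : μ (Y \ boundarySet N Y) ≤
      ∑' s : Sset N Y, μ ((Y \ boundarySet N Y) ∩ s.1 • (U' ∩ Y)) := by
    calc μ (Y \ boundarySet N Y)
        ≤ μ ((⋃ n, Yn n) ∪ ⋃ s ∈ Sset N Y, ((Y \ boundarySet N Y) ∩ s • (U' ∩ Y))) :=
          measure_mono hsubu
      _ ≤ μ (⋃ n, Yn n) + μ (⋃ s ∈ Sset N Y, ((Y \ boundarySet N Y) ∩ s • (U' ∩ Y))) :=
          measure_union_le _ _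
      _ = μ (⋃ s ∈ Sset N Y, ((Y \ boundarySet N Y) ∩ s • (U' ∩ Y))) := by
          rw [hYnU0, zero_add]
      _ ≤ ∑' s : Sset N Y, μ ((Y \ boundarySet N Y) ∩ s.1 • (U' ∩ Y)) :=
          measure_biUnion_le μ (Set.to_countable (Sset N Y)) _
  have hterm : ∀ s : Γ, μ ((Y \ boundarySet N Y) ∩ s • (U' ∩ Y)) ≤
      (if 1 < N s then ENNReal.ofReal (N s ^ (-β)) * μ (boundarySet N Y) else 0) +
        ENNReal.ofReal (N s ^ (-β)) * μ ((U' ∩ Y) \ boundarySet N Y) := by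
    intro s
    by_cases hscase : 1 < N s
    · rw [if_pos hscase]
      have hAm : MeasurableSet ((U' ∩ Y) ∩ s⁻¹ • Y) :=
        hUm.inter (smul_measurableSet' s⁻¹ hY.1.measurableSet)
      have hAY : (U' ∩ Y) ∩ s⁻¹ • Y ⊆ Y := Set.inter_subset_left.trans hUY
      have hsAY : s • ((U' ∩ Y) ∩ s⁻¹ • Y) ⊆ Y := by
        rintro x ⟨u, hu, rfl⟩
        exact Set.mem_inv_smul_set_iff.mp hu.2
      have hscale := hμ.2 s _ hAm hAY hsAY
      have hsub : (Y \ boundarySet N Y) ∩ s • (U' ∩ Y) ⊆ s • ((U' ∩ Y) ∩ s⁻¹ • Y) := by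
        rintro x ⟨hx1, u, hu, rfl⟩
        exact ⟨u, ⟨hu, Set.mem_inv_smul_set_iff.mpr hx1.1⟩, rfl⟩
      have hUsplit : μ ((U' ∩ Y) ∩ s⁻¹ • Y) ≤
          μ (boundarySet N Y) + μ ((U' ∩ Y) \ boundarySet N Y) := by
        refine le_trans (measure_mono ?_) (measure_union_le _ _)
        intro x hx
        by_cases h : x ∈ boundarySet N Y
        · exact Or.inl h
        · exact Or.inr ⟨hx.1, h⟩
      calc μ ((Y \ boundarySet N Y) ∩ s • (U' ∩ Y)) ≤ μ (s • ((U' ∩ Y) ∩ s⁻¹ • Y)) :=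
            measure_mono hsub
        _ = ENNReal.ofReal (N s ^ (-β)) * μ ((U' ∩ Y) ∩ s⁻¹ • Y) := hscale
        _ ≤ ENNReal.ofReal (N s ^ (-β)) *
            (μ (boundarySet N Y) + μ ((U' ∩ Y) \ boundarySet N Y)) :=
            mul_le_mul_right hUsplit _
        _ = ENNReal.ofReal (N s ^ (-β)) * μ (boundarySet N Y) +
            ENNReal.ofReal (N s ^ (-β)) * μ ((U' ∩ Y) \ boundarySet N Y) := by ring
    · rw [if_neg hscase, zero_add]
      push_neg at hscase
      have hAm : MeasurableSet (((U' ∩ Y) \ boundarySet N Y) ∩ s⁻¹ • Y) :=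
        (hUm.diff hY₀m).inter (smul_measurableSet' s⁻¹ hY.1.measurableSet)
      have hAY : ((U' ∩ Y) \ boundarySet N Y) ∩ s⁻¹ • Y ⊆ Y := fun x hx => hUY hx.1.1
      have hsAY : s • (((U' ∩ Y) \ boundarySet N Y) ∩ s⁻¹ • Y) ⊆ Y := by
        rintro x ⟨u, hu, rfl⟩
        exact Set.mem_inv_smul_set_iff.mp hu.2
      have hscale := hμ.2 s _ hAm hAY hsAY
      have hsub : (Y \ boundarySet N Y) ∩ s • (U' ∩ Y) ⊆
          s • (((U' ∩ Y) \ boundarySet N Y) ∩ s⁻¹ • Y) := by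
        rintro x ⟨hx1, u, hu, rfl⟩
        have huY : s • u ∈ Y := hx1.1
        have huNY₀ : u ∉ boundarySet N Y := fun hu0 =>
          hx1.2 (smul_mem_boundary' N hN Y hscase hu0 huY)
        exact ⟨u, ⟨⟨hu, huNY₀⟩, Set.mem_inv_smul_set_iff.mpr huY⟩, rfl⟩
      calc μ ((Y \ boundarySet N Y) ∩ s • (U' ∩ Y))
          ≤ μ (s • (((U' ∩ Y) \ boundarySet N Y) ∩ s⁻¹ • Y)) := measure_mono hsub
        _ = ENNReal.ofReal (N s ^ (-β)) * μ (((U' ∩ Y) \ boundarySet N Y) ∩ s⁻¹ • Y) :=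
            hscale
        _ ≤ ENNReal.ofReal (N s ^ (-β)) * μ ((U' ∩ Y) \ boundarySet N Y) :=
            mul_le_mul_right (measure_mono Set.inter_subset_left) _
  refine hstep1.trans ?_
  have h1 : ∑' s : Sset N Y, μ ((Y \ boundarySet N Y) ∩ s.1 • (U' ∩ Y)) ≤
      ∑' s : Sset N Y,
        ((if 1 < N s.1 then ENNReal.ofReal (N s.1 ^ (-β)) * μ (boundarySet N Y) else 0) +
          ENNReal.ofReal (N s.1 ^ (-β)) * μ ((U' ∩ Y) \ boundarySet N Y)) :=
    ENNReal.tsum_le_tsum fun s => hterm s.1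
  rw [ENNReal.tsum_add] at h1
  refine h1.trans (add_le_add ?_ ?_)
  · have he : ∀ s : Sset N Y,
        (if 1 < N s.1 then ENNReal.ofReal (N s.1 ^ (-β)) * μ (boundarySet N Y) else 0)
          = (if 1 < N s.1 then ENNReal.ofReal (N s.1 ^ (-β)) else 0) * μ (boundarySet N Y) := by
      intro s; split <;> simp
    rw [tsum_congr he, ENNReal.tsum_mul_right,
      tsum_ite_subtype (Sset N Y) (fun γ => 1 < N γ) (fun γ => ENNReal.ofReal (N γ ^ (-β)))]
  · rw [ENNReal.tsum_mul_right]
    exact mul_le_mul_right hUd _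
set_option maxHeartbeats 1000000 in
/-- Under the standing hypotheses (i) and (ii), for a nonzero `β ∈ ℝ` such
that `(N(s)^{-β})_{s ∈ S}` is summable, every `β`-scaling Borel probability measure `μ` on `X`
satisfies `μ(Y \ Y₀) ≤ μ(Y₀) · Σ_{s ∈ S, N(s) > 1} N(s)^{-β}`, and consequently
`μ(Y₀) ≥ (1 + Σ_{s ∈ S, N(s) > 1} N(s)^{-β})⁻¹`. -/
theorem scaling_measure_boundary_lower_bound
    {Γ X : Type*} [Group Γ] [Countable Γ]
    [TopologicalSpace X] [LocallyCompactSpace X] [SecondCountableTopology X] [T2Space X]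
    [MeasurableSpace X] [BorelSpace X] [MulAction Γ X] [ContinuousConstSMul Γ X]
    (N : Γ →* ℝ) (hN : ∀ γ, 0 < N γ)
    (Y : Set X) (hY : IsClopen Y) (hYcov : (⋃ γ : Γ, γ • Y) = Set.univ)
    (Yn : ℕ → Set X) (γn : ℕ → Γ)
    (hYnMeas : ∀ n, MeasurableSet (Yn n)) (hYnSub : ∀ n, Yn n ⊆ Y)
    (hi : ∀ U : Set X, IsOpen U → boundarySet N Y ⊆ U →
      Y \ (⋃ s ∈ Sset N Y, s • U) ⊆ ⋃ n, Yn n)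
    (hii : ∀ n, N (γn n) ≠ 1 ∧ γn n • Yn n = Yn n)
    (β : ℝ) (hβ : β ≠ 0)
    (hsum : Summable (fun s : Sset N Y => N s.1 ^ (-β)))
    (μ : Measure X) [IsProbabilityMeasure μ] (hμ : IsScaling N Y β μ) :
    μ (Y \ boundarySet N Y) ≤ μ (boundarySet N Y) *
        ENNReal.ofReal (∑' s : {γ : Γ // γ ∈ Sset N Y ∧ 1 < N γ}, N s.1 ^ (-β)) ∧
      ENNReal.ofReal ((1 + ∑' s : {γ : Γ // γ ∈ Sset N Y ∧ 1 < N γ}, N s.1 ^ (-β))⁻¹) ≤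
        μ (boundarySet N Y) := by
  have hYm : MeasurableSet Y := hY.1.measurableSet
  have hWopen : IsOpen (⋃ (γ : Γ) (_ : 1 < N γ), γ • Y) :=
    isOpen_iUnion fun γ => isOpen_iUnion fun _ => hY.2.smul γ
  have hY₀m : MeasurableSet (boundarySet N Y) := (hY.1.sdiff hWopen).measurableSet
  have hpos : ∀ γ : Γ, 0 < N γ ^ (-β) := fun γ => Real.rpow_pos_of_pos (hN γ) _
  have hsumT : Summable (fun t : {γ : Γ // γ ∈ Sset N Y ∧ 1 < N γ} => N t.1 ^ (-β)) :=
    summable_subt (Sset N Y) (fun γ => 1 < N γ) (fun γ => N γ ^ (-β)) hsum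
  have hrD0 : 0 ≤ ∑' t : {γ : Γ // γ ∈ Sset N Y ∧ 1 < N γ}, N t.1 ^ (-β) :=
    tsum_nonneg fun t => (hpos t.1).le
  have hDeq : ∑' t : {γ : Γ // γ ∈ Sset N Y ∧ 1 < N γ}, ENNReal.ofReal (N t.1 ^ (-β))
      = ENNReal.ofReal (∑' t : {γ : Γ // γ ∈ Sset N Y ∧ 1 < N γ}, N t.1 ^ (-β)) :=
    (ENNReal.ofReal_tsum_of_nonneg (fun t => (hpos _).le) hsumT).symm
  have hKeq : ∑' s : Sset N Y, ENNReal.ofReal (N s.1 ^ (-β))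
      = ENNReal.ofReal (∑' s : Sset N Y, N s.1 ^ (-β)) :=
    (ENNReal.ofReal_tsum_of_nonneg (fun s => (hpos _).le) hsum).symm
  have hKtop : (∑' s : Sset N Y, ENNReal.ofReal (N s.1 ^ (-β))) ≠ ⊤ := by
    rw [hKeq]; exact ENNReal.ofReal_ne_top
  have hμY : μ Y = 1 := (prob_compl_eq_zero_iff hYm).mp hμ.1
  have hYn0 : ∀ n, μ (Yn n) = 0 := by
    intro n
    have hs := hμ.2 (γn n) (Yn n) (hYnMeas n) (hYnSub n)
      (by rw [(hii n).2]; exact hYnSub n)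
    rw [(hii n).2] at hs
    by_contra h0
    have hc : ENNReal.ofReal (N (γn n) ^ (-β)) = 1 := by
      have h1 : ENNReal.ofReal (N (γn n) ^ (-β)) * μ (Yn n) = 1 * μ (Yn n) := by
        rw [one_mul]; exact hs.symm
      exact (ENNReal.mul_left_inj h0 (measure_ne_top μ _)).mp h1
    rw [ENNReal.ofReal_eq_one] at hc
    have hlog : (-β) * Real.log (N (γn n)) = 0 := by
      rw [← Real.log_rpow (hN (γn n)), hc, Real.log_one]
    have hβ' : (-β) ≠ 0 := neg_ne_zero.mpr hβ
    have hlz : Real.log (N (γn n)) = 0 := by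
      rcases mul_eq_zero.mp hlog with h | h
      · exact absurd h hβ'
      · exact h
    rcases Real.log_eq_zero.mp hlz with h | h | h
    · exact absurd h (ne_of_gt (hN _))
    · exact (hii n).1 h
    · nlinarith [hN (γn n)]
  have hYnU0 : μ (⋃ n, Yn n) = 0 := measure_iUnion_null hYn0
  have hmain : μ (Y \ boundarySet N Y) ≤
      (∑' t : {γ : Γ // γ ∈ Sset N Y ∧ 1 < N γ}, ENNReal.ofReal (N t.1 ^ (-β))) *
        μ (boundarySet N Y) := by
    apply ENNReal.le_of_forall_pos_le_add
    intro δ hδ _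
    have hδ' : ((δ : ℝ≥0∞) / ((∑' s : Sset N Y, ENNReal.ofReal (N s.1 ^ (-β))) + 1)) ≠ 0 := by
      simp only [ne_eq, ENNReal.div_eq_zero_iff, not_or]
      exact ⟨ENNReal.coe_ne_zero.mpr hδ.ne', by simp [hKtop]⟩
    refine (key_estimate N hN Y hY Yn hi β μ hμ hY₀m hYnU0 _ hδ').trans ?_
    refine add_le_add_right ?_ _
    calc (∑' s : Sset N Y, ENNReal.ofReal (N s.1 ^ (-β))) *
          ((δ : ℝ≥0∞) / ((∑' s : Sset N Y, ENNReal.ofReal (N s.1 ^ (-β))) + 1))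
        ≤ ((∑' s : Sset N Y, ENNReal.ofReal (N s.1 ^ (-β))) + 1) *
          ((δ : ℝ≥0∞) / ((∑' s : Sset N Y, ENNReal.ofReal (N s.1 ^ (-β))) + 1)) := by
          exact mul_le_mul_left le_self_add _
      _ ≤ δ := ENNReal.mul_div_le
  have hfirst : μ (Y \ boundarySet N Y) ≤ μ (boundarySet N Y) *
      ENNReal.ofReal (∑' s : {γ : Γ // γ ∈ Sset N Y ∧ 1 < N γ}, N s.1 ^ (-β)) := by
    rw [← hDeq, mul_comm]; exact hmain
  refine ⟨hfirst, ?_⟩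
  have hone : (1 : ℝ≥0∞) ≤ μ (boundarySet N Y) *
      (1 + ∑' t : {γ : Γ // γ ∈ Sset N Y ∧ 1 < N γ}, ENNReal.ofReal (N t.1 ^ (-β))) := by
    have h1 : μ Y ≤ μ (boundarySet N Y) + μ (Y \ boundarySet N Y) := by
      refine le_trans (measure_mono ?_) (measure_union_le _ _)
      intro x hx
      by_cases h : x ∈ boundarySet N Y
      · exact Or.inl h
      · exact Or.inr ⟨hx, h⟩
    calc (1 : ℝ≥0∞) = μ Y := hμY.symm
      _ ≤ μ (boundarySet N Y) + μ (Y \ boundarySet N Y) := h1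
      _ ≤ μ (boundarySet N Y) +
          (∑' t : {γ : Γ // γ ∈ Sset N Y ∧ 1 < N γ}, ENNReal.ofReal (N t.1 ^ (-β))) *
            μ (boundarySet N Y) := add_le_add_right hmain _
      _ = μ (boundarySet N Y) *
          (1 + ∑' t : {γ : Γ // γ ∈ Sset N Y ∧ 1 < N γ}, ENNReal.ofReal (N t.1 ^ (-β))) := by
          ring
  have h1D : (1 : ℝ≥0∞) + (∑' t : {γ : Γ // γ ∈ Sset N Y ∧ 1 < N γ},
      ENNReal.ofReal (N t.1 ^ (-β)))
      = ENNReal.ofReal (1 + ∑' t : {γ : Γ // γ ∈ Sset N Y ∧ 1 < N γ}, N t.1 ^ (-β)) := by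
    rw [ENNReal.ofReal_add zero_le_one hrD0, ENNReal.ofReal_one, hDeq]
  have h1D0 : (1 : ℝ≥0∞) + (∑' t : {γ : Γ // γ ∈ Sset N Y ∧ 1 < N γ},
      ENNReal.ofReal (N t.1 ^ (-β))) ≠ 0 :=
    (lt_of_lt_of_le zero_lt_one le_self_add).ne'
  have h1Dtop : (1 : ℝ≥0∞) + (∑' t : {γ : Γ // γ ∈ Sset N Y ∧ 1 < N γ},
      ENNReal.ofReal (N t.1 ^ (-β))) ≠ ⊤ := by
    rw [h1D]; exact ENNReal.ofReal_ne_top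
  have hinv : ((1 : ℝ≥0∞) + (∑' t : {γ : Γ // γ ∈ Sset N Y ∧ 1 < N γ},
      ENNReal.ofReal (N t.1 ^ (-β))))⁻¹ ≤ μ (boundarySet N Y) :=
    enn_inv_le h1D0 h1Dtop hone
  calc ENNReal.ofReal ((1 + ∑' s : {γ : Γ // γ ∈ Sset N Y ∧ 1 < N γ}, N s.1 ^ (-β))⁻¹)
      = (ENNReal.ofReal (1 + ∑' s : {γ : Γ // γ ∈ Sset N Y ∧ 1 < N γ}, N s.1 ^ (-β)))⁻¹ :=
        ENNReal.ofReal_inv_of_pos (by linarith)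
    _ = ((1 : ℝ≥0∞) + (∑' t : {γ : Γ // γ ∈ Sset N Y ∧ 1 < N γ},
        ENNReal.ofReal (N t.1 ^ (-β))))⁻¹ := by rw [h1D]
    _ ≤ μ (boundarySet N Y) := hinv
end
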